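/- arXiv:1911.09909 — 5 statements merged into one kernel-verified Lean document; each statement's English description precedes it below -/
import Mathlib

section
/- For every oriented graph G→, the pushable chromatic number is at most the oriented chromatic number, which in turn is at most twice the pushable chromatic number: χ_p(G→) ≤ χ_o(G→) ≤ 2·χ_p(G→). -/
/-- An oriented graph: a loopless directed graph without opposite arcs. -/
structure OrientedGraph (V : Type*) where
  adj : V → V → Prop
  irrefl' : ∀ v, ¬ adj v v
  asymm' : ∀ u v, adj u v → ¬ adj v u

namespace OrientedGraph

variable {V W : Type*}

/-- Pushing a set `S` of vertices reverses every arc with exactly one endpoint in `S`. -/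
def push (G : OrientedGraph V) (S : Set V) : OrientedGraph V where
  adj u v := ((u ∈ S ↔ v ∈ S) ∧ G.adj u v) ∨ (¬(u ∈ S ↔ v ∈ S) ∧ G.adj v u)
  irrefl' v := by
    rintro (⟨_, h⟩ | ⟨h, _⟩)
    · exact G.irrefl' v h
    · exact h Iff.rfl
  asymm' u v := by
    rintro (⟨h1, h2⟩ | ⟨h1, h2⟩) (⟨h3, h4⟩ | ⟨h3, h4⟩)
    · exact G.asymm' u v h2 h4
    · exact h3 h1.symm
    · exact h1 h3.symm
    · exact G.asymm' v u h2 h4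

/-- A homomorphism of oriented graphs. -/
def IsHom (G : OrientedGraph V) (H : OrientedGraph W) (f : V → W) : Prop :=
  ∀ u v, G.adj u v → H.adj (f u) (f v)

/-- A pushable homomorphism: a homomorphism from some graph obtained from `G`
by pushing a set of vertices. -/
def IsPushableHom (G : OrientedGraph V) (H : OrientedGraph W) (f : V → W) : Prop :=
  ∃ S : Set V, IsHom (G.push S) H f

/-- The underlying (simple) undirected graph of an oriented graph. -/
def toSimpleGraph (G : OrientedGraph V) : SimpleGraph V where
  Adj u v := G.adj u v ∨ G.adj v u
  symm := ⟨fun _ _ h => Or.symm h⟩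
  loopless := ⟨fun v h => h.elim (G.irrefl' v) (G.irrefl' v)⟩

/-- The oriented chromatic number: the least order of an oriented graph that `G`
admits a homomorphism to. -/
noncomputable def orientedChromatic (G : OrientedGraph V) : ℕ :=
  sInf {n | ∃ (H : OrientedGraph (Fin n)) (f : V → Fin n), IsHom G H f}

/-- The pushable chromatic number: the least order of an oriented graph that `G`
admits a pushable homomorphism to. -/
noncomputable def pushableChromatic (G : OrientedGraph V) : ℕ :=
  sInf {n | ∃ (H : OrientedGraph (Fin n)) (f : V → Fin n), IsPushableHom G H f}

/-- `signedAdj C true u w` means `w ∈ N⁺(u)`; `signedAdj C false u w` means `w ∈ N⁻(u)`. -/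
def signedAdj (C : OrientedGraph V) : Bool → V → V → Prop
  | true, u, w => C.adj u w
  | false, u, w => C.adj w u

/-- The `s`-neighborhood of a set of vertices. -/
def signedNbhd (C : OrientedGraph V) (s : Bool) (S : Set V) : Set V :=
  {w | ∃ u ∈ S, C.signedAdj s u w}

/-- The set `N^a(J)` for a sign vector `a` and a tuple `v` of vertices. -/
def NSet (C : OrientedGraph V) {j : ℕ} (a : Fin j → Bool) (v : Fin j → V) : Set V :=
  {w | (∀ i, C.signedAdj (a i) (v i) w) ∨ (∀ i, C.signedAdj (!(a i)) (v i) w)}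

/-- Property `P(j,k)`: for every sign vector `a ∈ {+,-}^j` and every set of `j`
distinct vertices, `|N^a(J)| ≥ k`. -/
def HasPropP (C : OrientedGraph V) (j k : ℕ) : Prop :=
  ∀ (a : Fin j → Bool) (v : Fin j → V), Function.Injective v → k ≤ (C.NSet a v).ncard

end OrientedGraph

/-- The Paley tournament on `ZMod 7`: `ij` is an arc iff `j - i ∈ {1, 2, 4}`. -/
def Pal7 : OrientedGraph (ZMod 7) where
  adj i j := j - i = 1 ∨ j - i = 2 ∨ j - i = 4
  irrefl' := by decide
  asymm' := by decide

/-- `mad(G) < 3`: every nonempty subgraph `H` satisfies `2|E(H)|/|V(H)| < 3`. -/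
def MadLT3 {V : Type*} (G : SimpleGraph V) : Prop :=
  ∀ H : G.Subgraph, H.verts.Nonempty → 2 * H.edgeSet.ncard < 3 * H.verts.ncard

/-- Degeneracy at most `d`: every nonempty set of vertices contains a vertex with
at most `d` neighbors inside the set. -/
def DegeneracyLE {V : Type*} (G : SimpleGraph V) (d : ℕ) : Prop :=
  ∀ s : Set V, s.Nonempty → ∃ v ∈ s, (s ∩ G.neighborSet v).ncard ≤ d
namespace OrientedGraph

/-- Transport a homomorphism target along an equivalence. -/
lemma exists_hom_fin {V W : Type*} {m : ℕ} (G : OrientedGraph V) (H : OrientedGraph W)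
    (e : W ≃ Fin m) (f : V → W) (hf : IsHom G H f) :
    ∃ (H' : OrientedGraph (Fin m)) (g : V → Fin m), IsHom G H' g := by
  refine ⟨⟨fun i j => H.adj (e.symm i) (e.symm j), fun i h => H.irrefl' _ h,
    fun i j h h' => H.asymm' _ _ h h'⟩, fun v => e (f v), fun u v h => ?_⟩
  simpa using hf u v h

lemma push_empty_adj {V : Type*} (G : OrientedGraph V) (u v : V) (h : G.adj u v) :
    (G.push ∅).adj u v := Or.inl ⟨by simp, h⟩

lemma orientedSet_nonempty (V : Type) [Fintype V] (G : OrientedGraph V) :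
    {n | ∃ (H : OrientedGraph (Fin n)) (f : V → Fin n), IsHom G H f}.Nonempty := by
  obtain ⟨H', g, hg⟩ := exists_hom_fin G G (Fintype.equivFin V) id (fun u v h => h)
  exact ⟨_, H', g, hg⟩

end OrientedGraph

/-- For every oriented graph `G`, `χ_p(G) ≤ χ_o(G) ≤ 2 χ_p(G)`. -/
theorem pushable_le_oriented_le_two_mul_pushable
    (V : Type) [Fintype V] (G : OrientedGraph V) :
    G.pushableChromatic ≤ G.orientedChromatic ∧
      G.orientedChromatic ≤ 2 * G.pushableChromatic := by
  classical
  set A := {n | ∃ (H : OrientedGraph (Fin n)) (f : V → Fin n), G.IsHom H f} with hA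
  set B := {n | ∃ (H : OrientedGraph (Fin n)) (f : V → Fin n), G.IsPushableHom H f} with hB
  have hAB : A ⊆ B := by
    rintro n ⟨H, f, hf⟩
    exact ⟨H, f, ∅, fun u v h => by
      rcases h with ⟨_, h⟩ | ⟨hne, _⟩
      · exact hf u v h
      · exact absurd (by simp) hne⟩
  have hAne := G.orientedSet_nonempty V
  constructor
  · exact Nat.sInf_le (hAB (Nat.sInf_mem hAne))
  · -- B is nonempty since A ⊆ B
    have hBne : B.Nonempty := ⟨_, hAB hAne.choose_spec⟩
    obtain ⟨H, f, S, hf⟩ := Nat.sInf_mem hBne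
    -- build H' on Fin (sInf B) × Bool
    let H' : OrientedGraph (Fin (sInf B) × Bool) :=
      { adj := fun p q => (p.2 = q.2 ∧ H.adj p.1 q.1) ∨ (p.2 ≠ q.2 ∧ H.adj q.1 p.1)
        irrefl' := by
          rintro p (⟨_, h⟩ | ⟨h, _⟩)
          · exact H.irrefl' _ h
          · exact h rfl
        asymm' := by
          rintro p q (⟨h1, h2⟩ | ⟨h1, h2⟩) (⟨h3, h4⟩ | ⟨h3, h4⟩)
          · exact H.asymm' _ _ h2 h4
          · exact h3 h1.symm
          · exact h1 h3.symm
          · exact H.asymm' _ _ h2 h4 }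
    let g : V → Fin (sInf B) × Bool := fun v => (f v, decide (v ∈ S))
    have hg : G.IsHom H' g := by
      intro u v h
      by_cases hiff : u ∈ S ↔ v ∈ S
      · have : (G.push S).adj u v := Or.inl ⟨hiff, h⟩
        exact Or.inl ⟨by simp [g, decide_eq_decide.mpr hiff], hf u v this⟩
      · have : (G.push S).adj v u := by
          refine Or.inr ⟨fun h' => hiff h'.symm, h⟩
        refine Or.inr ⟨?_, hf v u this⟩
        simp only [g, ne_eq, decide_eq_decide]
        exact hiff
    have hcard : Fintype.card (Fin (sInf B) × Bool) = 2 * sInf B := by simp [mul_comm]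
    obtain ⟨H'', g', hg'⟩ :=
      G.exists_hom_fin H' (Fintype.equivFinOfCardEq hcard) g hg
    exact Nat.sInf_le ⟨H'', g', hg'⟩
end

section
/- For every integer Δ ≥ 29, there exist a connected finite simple graph G with maximum degree at most Δ and an orientation G→ of G whose pushable chromatic number satisfies χ_p(G→) ≥ 2^(Δ/2 − 1) (as a real-number inequality). -/
namespace PushAux

open OrientedGraph

section Abstract

variable {V E : Type} (e₀ e₁ : E → V)

/-- The orientation of the edge-indexed graph determined by `σ`. -/
def dir (hne : ∀ i, e₀ i ≠ e₁ i)
    (hinj : ∀ i j, ((e₀ i = e₀ j ∧ e₁ i = e₁ j) ∨ (e₀ i = e₁ j ∧ e₁ i = e₀ j)) → i = j)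
    (σ : E → Bool) : OrientedGraph V where
  adj u v := ∃ i, (e₀ i = u ∧ e₁ i = v ∧ σ i = true) ∨ (e₀ i = v ∧ e₁ i = u ∧ σ i = false)
  irrefl' v := by
    rintro ⟨i, (⟨h1, h2, _⟩ | ⟨h1, h2, _⟩)⟩ <;> exact hne i (h1.trans h2.symm)
  asymm' u v := by
    rintro ⟨i, (⟨h1, h2, h3⟩ | ⟨h1, h2, h3⟩)⟩ ⟨j, (⟨g1, g2, g3⟩ | ⟨g1, g2, g3⟩)⟩
    · have : i = j := hinj i j (Or.inr ⟨h1.trans g2.symm, h2.trans g1.symm⟩)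
      subst this; exact hne i (g1.trans h2.symm)
    · have : i = j := hinj i j (Or.inl ⟨h1.trans g1.symm, h2.trans g2.symm⟩)
      subst this; exact Bool.noConfusion (h3.symm.trans g3)
    · have : i = j := hinj i j (Or.inl ⟨h1.trans g1.symm, h2.trans g2.symm⟩)
      subst this; exact Bool.noConfusion (g3.symm.trans h3)
    · have : i = j := hinj i j (Or.inr ⟨h1.trans g2.symm, h2.trans g1.symm⟩)
      subst this; exact hne i (g1.trans h2.symm)

/-- Data parametrizing potential pushable colorings with fewer than `K` colors. -/
abbrev PData (V : Type) (K : ℕ) : Type :=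
  Σ n : Fin K, (Fin n.1 → Fin n.1 → Bool) × (V → Fin n.1) × (V → Bool)

/-- The orientation determined by a coloring datum. -/
def phi (t : PData V K) : E → Bool := fun i =>
  let p := t.2.1 (t.2.2.1 (e₀ i)) (t.2.2.1 (e₁ i))
  if t.2.2.2 (e₀ i) = t.2.2.2 (e₁ i) then p else !p

end Abstract

end PushAux

namespace PushAux

open OrientedGraph

section Abstract2

variable {V E : Type} (e₀ e₁ : E → V)
variable (hne : ∀ i, e₀ i ≠ e₁ i)
variable (hinj : ∀ i j, ((e₀ i = e₀ j ∧ e₁ i = e₁ j) ∨ (e₀ i = e₁ j ∧ e₁ i = e₀ j)) → i = j)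

lemma toSimpleGraph_adj (G : OrientedGraph V) (u v : V) :
    G.toSimpleGraph.Adj u v ↔ (G.adj u v ∨ G.adj v u) := Iff.rfl

lemma dir_adj (σ : E → Bool) (u v : V) :
    (dir e₀ e₁ hne hinj σ).adj u v ↔
      ∃ i, (e₀ i = u ∧ e₁ i = v ∧ σ i = true) ∨ (e₀ i = v ∧ e₁ i = u ∧ σ i = false) := Iff.rfl

include hne hinj in
theorem abstract_main [Fintype V] [DecidableEq V] [Fintype E] (K : ℕ)
    (hcard : ∑ n ∈ Finset.range K, 2 ^ (n * n) * (n ^ Fintype.card V * 2 ^ Fintype.card V)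
      < 2 ^ Fintype.card E) :
    ∃ G' : OrientedGraph V,
      (∀ u v, G'.toSimpleGraph.Adj u v ↔
        ∃ i, (e₀ i = u ∧ e₁ i = v) ∨ (e₀ i = v ∧ e₁ i = u)) ∧
      K ≤ G'.pushableChromatic := by
  classical
  -- cardinality of the parameter space
  have hT : Fintype.card (PData V K) < Fintype.card (E → Bool) := by
    have h1 : Fintype.card (E → Bool) = 2 ^ Fintype.card E := by
      simp [Fintype.card_fun]
    have h2 : Fintype.card (PData V K)
        = ∑ n ∈ Finset.range K, 2 ^ (n * n) * (n ^ Fintype.card V * 2 ^ Fintype.card V) := by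
      rw [Fintype.card_sigma]
      rw [← Fin.sum_univ_eq_sum_range
        (fun n => 2 ^ (n * n) * (n ^ Fintype.card V * 2 ^ Fintype.card V)) K]
      refine Finset.sum_congr rfl fun n _ => ?_
      rw [Fintype.card_prod, Fintype.card_prod, Fintype.card_fun, Fintype.card_fun,
        Fintype.card_fun, Fintype.card_fun, Fintype.card_bool, Fintype.card_fin, ← pow_mul]
    rw [h1, h2]; exact hcard
  -- choose an orientation not covered by any datum
  have hns : ¬ Function.Surjective (phi e₀ e₁ : PData V K → E → Bool) := fun h =>
    absurd (Fintype.card_le_of_surjective _ h) (not_le.mpr hT)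
  rw [Function.Surjective] at hns; push_neg at hns
  obtain ⟨σ, hσ⟩ := hns
  set G' := dir e₀ e₁ hne hinj σ with hG'
  have hAdj : ∀ u v, G'.toSimpleGraph.Adj u v ↔
      ∃ i, (e₀ i = u ∧ e₁ i = v) ∨ (e₀ i = v ∧ e₁ i = u) := by
    intro u v
    rw [toSimpleGraph_adj, hG', dir_adj, dir_adj]
    constructor
    · rintro (⟨i, (⟨a, b, -⟩ | ⟨a, b, -⟩)⟩ | ⟨i, (⟨a, b, -⟩ | ⟨a, b, -⟩)⟩)
      · exact ⟨i, Or.inl ⟨a, b⟩⟩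
      · exact ⟨i, Or.inr ⟨a, b⟩⟩
      · exact ⟨i, Or.inr ⟨a, b⟩⟩
      · exact ⟨i, Or.inl ⟨a, b⟩⟩
    · rintro ⟨i, (⟨a, b⟩ | ⟨a, b⟩)⟩ <;> cases hb : σ i
      · exact Or.inr ⟨i, Or.inr ⟨a, b, hb⟩⟩
      · exact Or.inl ⟨i, Or.inl ⟨a, b, hb⟩⟩
      · exact Or.inl ⟨i, Or.inr ⟨a, b, hb⟩⟩
      · exact Or.inr ⟨i, Or.inl ⟨a, b, hb⟩⟩
  refine ⟨G', hAdj, ?_⟩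
  -- the coloring set is nonempty
  have hnonempty : {n | ∃ (H : OrientedGraph (Fin n)) (f : V → Fin n),
      IsPushableHom G' H f}.Nonempty := by
    refine ⟨Fintype.card V, ⟨fun a b => G'.adj ((Fintype.equivFin V).symm a) ((Fintype.equivFin V).symm b),
      fun a => G'.irrefl' _, fun a b => G'.asymm' _ _⟩, Fintype.equivFin V, (∅ : Set V), ?_⟩
    rintro u v (⟨-, h⟩ | ⟨hiff, -⟩)
    · show G'.adj ((Fintype.equivFin V).symm ((Fintype.equivFin V) u)) _
      simpa using h
    · exact absurd (by simp) hiff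
  refine le_csInf hnonempty ?_
  rintro n ⟨H, f, S, hhom⟩
  by_contra hlt
  push_neg at hlt
  -- extract a datum covering σ, contradiction
  apply hσ ⟨⟨n, hlt⟩, fun a b => decide (H.adj a b), f, fun v => decide (v ∈ S)⟩
  funext i
  simp only [phi]
  cases hb : σ i
  · have hadj : G'.adj (e₁ i) (e₀ i) := ⟨i, Or.inr ⟨rfl, rfl, hb⟩⟩
    by_cases hS : (e₀ i ∈ S ↔ e₁ i ∈ S)
    · have h1 : H.adj (f (e₁ i)) (f (e₀ i)) := hhom _ _ (Or.inl ⟨hS.symm, hadj⟩)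
      have h2 : ¬ H.adj (f (e₀ i)) (f (e₁ i)) := H.asymm' _ _ h1
      rw [if_pos (by simpa [decide_eq_decide] using hS)]
      simpa using h2
    · have h1 : H.adj (f (e₀ i)) (f (e₁ i)) :=
        hhom _ _ (Or.inr ⟨hS, hadj⟩)
      rw [if_neg (by simpa [decide_eq_decide] using hS)]
      simpa using h1
  · have hadj : G'.adj (e₀ i) (e₁ i) := ⟨i, Or.inl ⟨rfl, rfl, hb⟩⟩
    by_cases hS : (e₀ i ∈ S ↔ e₁ i ∈ S)
    · have h1 : H.adj (f (e₀ i)) (f (e₁ i)) := hhom _ _ (Or.inl ⟨hS, hadj⟩)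
      rw [if_pos (by simpa [decide_eq_decide] using hS)]
      simpa using h1
    · have h1 : H.adj (f (e₁ i)) (f (e₀ i)) :=
        hhom _ _ (Or.inr ⟨fun hc => hS hc.symm, hadj⟩)
      have h2 : ¬ H.adj (f (e₀ i)) (f (e₁ i)) := H.asymm' _ _ h1
      rw [if_neg (by simpa [decide_eq_decide] using hS)]
      simpa using h2

end Abstract2

end PushAux

namespace PushAux

lemma bern (a : ℕ) : ∀ M : ℕ, a ^ M * (a + 2 * M) ≤ (a + 2) ^ M * a := by
  intro M
  induction M with
  | zero => simp
  | succ M ih =>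
    have h1 : a ^ (M + 1) * (a + 2 * (M + 1)) = a ^ M * (a * (a + 2 * M + 2)) := by ring
    have h2 : a * (a + 2 * M + 2) ≤ (a + 2 * M) * (a + 2) := by nlinarith
    calc a ^ (M + 1) * (a + 2 * (M + 1)) = a ^ M * (a * (a + 2 * M + 2)) := by ring
      _ ≤ a ^ M * ((a + 2 * M) * (a + 2)) := Nat.mul_le_mul_left _ h2
      _ = (a ^ M * (a + 2 * M)) * (a + 2) := by ring
      _ ≤ ((a + 2) ^ M * a) * (a + 2) := Nat.mul_le_mul_right _ ih
      _ = (a + 2) ^ (M + 1) * a := by ring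

lemma key (C a M : ℕ) (ha : 1 ≤ a) (hM : C * a ≤ 2 * M) : C * a ^ M < (a + 2) ^ M := by
  have h0 : 0 < a ^ M := Nat.pow_pos (by omega)
  have hmain : C * a ^ M * a < (a + 2) ^ M * a := by
    calc C * a ^ M * a = a ^ M * (C * a) := by ring
      _ ≤ a ^ M * (2 * M) := Nat.mul_le_mul_left _ hM
      _ < a ^ M * (a + 2 * M) := by
          have : a ^ M * (a + 2 * M) = a ^ M * a + a ^ M * (2 * M) := by ring
          nlinarith
      _ ≤ (a + 2) ^ M * a := bern a M
  exact Nat.lt_of_mul_lt_mul_right hmain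

lemma sum_bound (K v : ℕ) :
    ∑ n ∈ Finset.range K, 2 ^ (n * n) * (n ^ v * 2 ^ v)
      ≤ K * (2 ^ ((K - 1) * (K - 1)) * (2 * (K - 1)) ^ v) := by
  have hterm : ∀ n ∈ Finset.range K,
      2 ^ (n * n) * (n ^ v * 2 ^ v) ≤ 2 ^ ((K - 1) * (K - 1)) * (2 * (K - 1)) ^ v := by
    intro n hn
    have hn' : n ≤ K - 1 := by simp only [Finset.mem_range] at hn; omega
    have h1 : 2 ^ (n * n) ≤ 2 ^ ((K - 1) * (K - 1)) :=
      Nat.pow_le_pow_right (by norm_num) (Nat.mul_le_mul hn' hn')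
    have h2 : n ^ v ≤ (K - 1) ^ v := Nat.pow_le_pow_left hn' v
    calc 2 ^ (n * n) * (n ^ v * 2 ^ v)
        ≤ 2 ^ ((K - 1) * (K - 1)) * ((K - 1) ^ v * 2 ^ v) :=
          Nat.mul_le_mul h1 (Nat.mul_le_mul_right _ h2)
      _ = 2 ^ ((K - 1) * (K - 1)) * (2 * (K - 1)) ^ v := by rw [mul_pow]; ring
  calc ∑ n ∈ Finset.range K, 2 ^ (n * n) * (n ^ v * 2 ^ v)
      ≤ (Finset.range K).card • (2 ^ ((K - 1) * (K - 1)) * (2 * (K - 1)) ^ v) :=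
        Finset.sum_le_card_nsmul _ _ _ hterm
    _ = K * (2 ^ ((K - 1) * (K - 1)) * (2 * (K - 1)) ^ v) := by
        rw [Finset.card_range, smul_eq_mul]

lemma two_mul_lt_two_pow : ∀ t : ℕ, 3 ≤ t → 2 * t < 2 ^ t := by
  intro t ht
  induction t with
  | zero => omega
  | succ n ih =>
    rcases Nat.lt_or_ge n 3 with h | h
    · interval_cases n <;> omega
    · have h1 := ih h
      have h2 : 2 ≤ 2 ^ n := Nat.one_lt_two_pow_iff.mpr (by omega)
      calc 2 * (n + 1) = 2 * n + 2 := by ring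
        _ < 2 ^ n + 2 := by omega
        _ ≤ 2 ^ n + 2 ^ n := by omega
        _ = 2 ^ (n + 1) := by ring

end PushAux

namespace PushAux

open OrientedGraph

theorem construction (m t h : ℕ) [NeZero m] (ht : 1 ≤ t) (hm2t : 2 * t + 2 ≤ m)
    (hh : h = 0 ∨ (m = 2 * h ∧ t < h)) (K : ℕ)
    (hcard : ∑ n ∈ Finset.range K, 2 ^ (n * n) * (n ^ m * 2 ^ m) < 2 ^ (m * t + h)) :
    ∃ G' : OrientedGraph (ZMod m),
      G'.toSimpleGraph.Connected ∧
      (∀ v, (G'.toSimpleGraph.neighborSet v).ncard ≤ 2 * t + (if h = 0 then 0 else 1)) ∧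
      K ≤ G'.pushableChromatic := by
  have hm : 0 < m := Nat.pos_of_ne_zero (NeZero.ne m)
  -- basic cast helpers
  have hcast : ∀ a b : ℕ, a < m → b < m → ((a : ZMod m) = (b : ZMod m)) → a = b := by
    intro a b ha hb he
    rw [← ZMod.val_cast_of_lt ha, ← ZMod.val_cast_of_lt hb, he]
  have hzero : ∀ a : ℕ, 0 < a → a < m → ((a : ZMod m) ≠ 0) := by
    intro a h0 hm' heq
    have h1 := (ZMod.natCast_eq_zero_iff a m).mp heq
    have h2 := Nat.le_of_dvd h0 h1
    omega
  -- the edge set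
  set e₀ : (Fin m × Fin t) ⊕ Fin h → ZMod m :=
    Sum.elim (fun p => ((p.1 : ℕ) : ZMod m)) (fun i => ((i : ℕ) : ZMod m)) with he₀
  set e₁ : (Fin m × Fin t) ⊕ Fin h → ZMod m :=
    Sum.elim (fun p => ((p.1 : ℕ) : ZMod m) + (((p.2 : ℕ) + 1 : ℕ) : ZMod m))
      (fun i => ((i : ℕ) : ZMod m) + ((h : ℕ) : ZMod m)) with he₁
  have hpos_h : ∀ _ : Fin h, m = 2 * h ∧ t < h := by
    intro i
    rcases hh with h0 | h1
    · exact absurd i.isLt (by omega)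
    · exact h1
  have hne : ∀ i, e₀ i ≠ e₁ i := by
    rintro (p | i) heq
    · simp only [he₀, he₁, Sum.elim_inl] at heq
      have : (((p.2 : ℕ) + 1 : ℕ) : ZMod m) = 0 := by
        have := (left_eq_add).mp heq
        exact this
      exact hzero _ (by omega) (by have := p.2.isLt; omega) this
    · obtain ⟨hm2, hth⟩ := hpos_h i
      simp only [he₀, he₁, Sum.elim_inr] at heq
      have : ((h : ℕ) : ZMod m) = 0 := (left_eq_add).mp heq
      exact hzero _ (by omega) (by omega) this
  have hinj : ∀ i j, ((e₀ i = e₀ j ∧ e₁ i = e₁ j) ∨ (e₀ i = e₁ j ∧ e₁ i = e₀ j)) → i = j := by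
    rintro (p | i) (q | j) (⟨h1, h2⟩ | ⟨h1, h2⟩) <;>
      simp only [he₀, he₁, Sum.elim_inl, Sum.elim_inr] at h1 h2
    -- inl inl, aligned
    · have hpq : (p.1 : ℕ) = (q.1 : ℕ) := hcast _ _ p.1.isLt q.1.isLt h1
      rw [h1] at h2
      have h3 := add_left_cancel h2
      have hd : (p.2 : ℕ) + 1 = (q.2 : ℕ) + 1 :=
        hcast _ _ (by have := p.2.isLt; omega) (by have := q.2.isLt; omega) h3
      congr 1
      exact Prod.ext (Fin.ext hpq) (Fin.ext (by omega))
    -- inl inl, crossed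
    · rw [h1] at h2
      have h3 : ((q.1 : ℕ) : ZMod m) + ((((q.2 : ℕ) + 1) + ((p.2 : ℕ) + 1) : ℕ) : ZMod m)
          = ((q.1 : ℕ) : ZMod m) := by push_cast; push_cast at h2; linear_combination h2
      have h4 := (add_eq_left).mp h3
      exact absurd h4 (hzero _ (by omega) (by have := p.2.isLt; have := q.2.isLt; omega))
    -- inl inr
    · obtain ⟨hm2, hth⟩ := hpos_h j
      rw [h1] at h2
      have h3 := add_left_cancel h2
      have hd : (p.2 : ℕ) + 1 = h :=
        hcast _ _ (by have := p.2.isLt; omega) (by omega) h3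
      have := p.2.isLt; omega
    · obtain ⟨hm2, hth⟩ := hpos_h j
      rw [h1] at h2
      have h3 : ((j : ℕ) : ZMod m) + ((h + ((p.2 : ℕ) + 1) : ℕ) : ZMod m)
          = ((j : ℕ) : ZMod m) := by push_cast; push_cast at h2; linear_combination h2
      have h4 := (add_eq_left).mp h3
      exact absurd h4 (hzero _ (by omega) (by have := p.2.isLt; have := j.isLt; omega))
    -- inr inl
    · obtain ⟨hm2, hth⟩ := hpos_h i
      rw [h1] at h2
      have h3 := add_left_cancel h2
      have hd : h = (q.2 : ℕ) + 1 :=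
        hcast _ _ (by omega) (by have := q.2.isLt; omega) h3
      have := q.2.isLt; omega
    · obtain ⟨hm2, hth⟩ := hpos_h i
      rw [h1] at h2
      have h3 : ((q.1 : ℕ) : ZMod m) + (((((q.2 : ℕ) + 1)) + h : ℕ) : ZMod m)
          = ((q.1 : ℕ) : ZMod m) := by push_cast; push_cast at h2; linear_combination h2
      have h4 := (add_eq_left).mp h3
      exact absurd h4 (hzero _ (by omega) (by have := q.2.isLt; have := i.isLt; omega))
    -- inr inr
    · obtain ⟨hm2, hth⟩ := hpos_h i
      have hij : (i : ℕ) = (j : ℕ) := hcast _ _ (by omega) (by omega) h1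
      congr 1
      exact Fin.ext hij
    · obtain ⟨hm2, hth⟩ := hpos_h i
      have h3 : ((i : ℕ) : ZMod m) = ((((j : ℕ) + h) : ℕ) : ZMod m) := by
        push_cast; push_cast at h1; linear_combination h1
      have h4 : (i : ℕ) = (j : ℕ) + h :=
        hcast _ _ (by omega) (by have := j.isLt; omega) h3
      have := i.isLt; omega
  -- apply the abstract theorem
  have hcards : Fintype.card (ZMod m) = m := ZMod.card m
  have hcardE : Fintype.card ((Fin m × Fin t) ⊕ Fin h) = m * t + h := by
    simp [Fintype.card_sum, Fintype.card_prod]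
  obtain ⟨G', hAdj, hK⟩ := abstract_main e₀ e₁ hne hinj K (by rw [hcards, hcardE]; exact hcard)
  refine ⟨G', ?_, ?_, hK⟩
  -- connectivity
  · have hadj1 : ∀ x : ZMod m, G'.toSimpleGraph.Adj x (x + 1) := by
      intro x
      refine (hAdj _ _).mpr ⟨Sum.inl (⟨x.val, x.val_lt⟩, ⟨0, ht⟩), Or.inl ⟨?_, ?_⟩⟩
      · simp only [he₀, Sum.elim_inl]
        exact ZMod.natCast_rightInverse x
      · simp only [he₁, Sum.elim_inl]
        rw [ZMod.natCast_rightInverse x]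
        norm_num
    have hreach : ∀ k : ℕ, G'.toSimpleGraph.Reachable 0 ((k : ℕ) : ZMod m) := by
      intro k
      induction k with
      | zero => simpa using SimpleGraph.Reachable.refl (0 : ZMod m)
      | succ k ih =>
        refine ih.trans ?_
        have := (hadj1 ((k : ℕ) : ZMod m)).reachable
        simpa [Nat.cast_add] using this
    rw [SimpleGraph.connected_iff]
    refine ⟨fun u v => ?_, inferInstance⟩
    have hu := hreach u.val
    have hv := hreach v.val
    rw [ZMod.natCast_rightInverse u] at hu
    rw [ZMod.natCast_rightInverse v] at hv
    exact hu.symm.trans hv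
  -- degree bound
  · intro v
    have hsub : G'.toSimpleGraph.neighborSet v ⊆
        (Set.range fun d : Fin t => v + (((d : ℕ) + 1 : ℕ) : ZMod m)) ∪
        (Set.range fun d : Fin t => v - (((d : ℕ) + 1 : ℕ) : ZMod m)) ∪
        (Set.range fun _ : Fin h => v + ((h : ℕ) : ZMod m)) := by
      intro w hw
      obtain ⟨i, hcase⟩ := (hAdj v w).mp hw
      rcases i with p | i
      · rcases hcase with ⟨h1, h2⟩ | ⟨h1, h2⟩ <;>
          simp only [he₀, he₁, Sum.elim_inl] at h1 h2
        · refine Or.inl (Or.inl ⟨p.2, ?_⟩)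
          show v + (((p.2 : ℕ) + 1 : ℕ) : ZMod m) = w
          rw [← h2, ← h1]
        · refine Or.inl (Or.inr ⟨p.2, ?_⟩)
          show v - (((p.2 : ℕ) + 1 : ℕ) : ZMod m) = w
          rw [← h2, add_sub_cancel_right]
          exact h1
      · obtain ⟨hm2, hth⟩ := hpos_h i
        have hself : ((h : ℕ) : ZMod m) + ((h : ℕ) : ZMod m) = 0 := by
          rw [← Nat.cast_add]
          have : h + h = m := by omega
          rw [this, ZMod.natCast_self]
        rcases hcase with ⟨h1, h2⟩ | ⟨h1, h2⟩ <;>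
          simp only [he₀, he₁, Sum.elim_inr] at h1 h2
        · refine Or.inr ⟨i, ?_⟩
          show v + ((h : ℕ) : ZMod m) = w
          rw [← h1]
          exact h2
        · refine Or.inr ⟨i, ?_⟩
          show v + ((h : ℕ) : ZMod m) = w
          rw [← h2, add_assoc, hself, add_zero]
          exact h1
    have hc1 : (Set.range fun d : Fin t => v + (((d : ℕ) + 1 : ℕ) : ZMod m)).ncard ≤ t := by
      rw [← Set.image_univ]
      refine le_trans (Set.ncard_image_le Set.finite_univ) ?_
      simp [Set.ncard_univ]
    have hc2 : (Set.range fun d : Fin t => v - (((d : ℕ) + 1 : ℕ) : ZMod m)).ncard ≤ t := by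
      rw [← Set.image_univ]
      refine le_trans (Set.ncard_image_le Set.finite_univ) ?_
      simp [Set.ncard_univ]
    have hc3 : (Set.range fun _ : Fin h => v + ((h : ℕ) : ZMod m)).ncard
        ≤ (if h = 0 then 0 else 1) := by
      rcases Nat.eq_zero_or_pos h with h0 | h0
      · subst h0
        rw [if_pos rfl]
        simp [Set.range_eq_empty]
      · rw [if_neg (by omega)]
        have : (Set.range fun _ : Fin h => v + ((h : ℕ) : ZMod m)) ⊆ {v + ((h : ℕ) : ZMod m)} := by
          rintro x ⟨d, rfl⟩; rfl
        refine le_trans (Set.ncard_le_ncard this (Set.finite_singleton _)) ?_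
        simp
    calc (G'.toSimpleGraph.neighborSet v).ncard
        ≤ ((Set.range fun d : Fin t => v + (((d : ℕ) + 1 : ℕ) : ZMod m)) ∪
          (Set.range fun d : Fin t => v - (((d : ℕ) + 1 : ℕ) : ZMod m)) ∪
          (Set.range fun _ : Fin h => v + ((h : ℕ) : ZMod m))).ncard :=
          Set.ncard_le_ncard hsub (Set.toFinite _)
      _ ≤ ((Set.range fun d : Fin t => v + (((d : ℕ) + 1 : ℕ) : ZMod m)) ∪
          (Set.range fun d : Fin t => v - (((d : ℕ) + 1 : ℕ) : ZMod m))).ncard +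
          (Set.range fun _ : Fin h => v + ((h : ℕ) : ZMod m)).ncard := Set.ncard_union_le _ _
      _ ≤ ((Set.range fun d : Fin t => v + (((d : ℕ) + 1 : ℕ) : ZMod m)).ncard +
          (Set.range fun d : Fin t => v - (((d : ℕ) + 1 : ℕ) : ZMod m)).ncard) +
          (Set.range fun _ : Fin h => v + ((h : ℕ) : ZMod m)).ncard := by
            have := Set.ncard_union_le (Set.range fun d : Fin t => v + (((d : ℕ) + 1 : ℕ) : ZMod m))
              (Set.range fun d : Fin t => v - (((d : ℕ) + 1 : ℕ) : ZMod m))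
            omega
      _ ≤ 2 * t + (if h = 0 then 0 else 1) := by omega
    
end PushAux

namespace PushAux

open OrientedGraph

lemma even_numeric (K t C a m : ℕ) (hK2 : 2 ≤ K)
    (hC : C = K * 2 ^ ((K - 1) * (K - 1))) (ha : a = 2 * (K - 1)) (hm : m = C * a)
    (h4 : a + 2 = 2 ^ t) :
    ∑ n ∈ Finset.range K, 2 ^ (n * n) * (n ^ m * 2 ^ m) < 2 ^ (m * t + 0) := by
  have h1 := sum_bound K m
  have h2 : K * (2 ^ ((K - 1) * (K - 1)) * (2 * (K - 1)) ^ m) = C * a ^ m := by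
    rw [hC, ha]; ring
  have h3 : C * a ^ m < (a + 2) ^ m := key C a m (by omega) (by omega)
  have h5 : (a + 2) ^ m = 2 ^ (m * t + 0) := by
    rw [h4, ← pow_mul, Nat.add_zero, Nat.mul_comm]
  calc ∑ n ∈ Finset.range K, 2 ^ (n * n) * (n ^ m * 2 ^ m)
      ≤ C * a ^ m := by rw [← h2]; exact h1
    _ < (a + 2) ^ m := h3
    _ = 2 ^ (m * t + 0) := h5

lemma odd_numeric (s t C q h m : ℕ) (hs1 : 1 ≤ s) (ht1 : 1 ≤ t)
    (hC : C = (s + 1) * 2 ^ (s * s)) (hq : q = 2 * (s * s)) (hh : h = C * q) (hm : m = 2 * h)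
    (hsq' : s * s + 1 ≤ 2 ^ (2 * t - 1)) :
    ∑ n ∈ Finset.range (s + 1), 2 ^ (n * n) * (n ^ m * 2 ^ m) < 2 ^ (m * t + h) := by
  have h1 := sum_bound (s + 1) m
  simp only [Nat.add_sub_cancel] at h1
  have h2 : (s + 1) * (2 ^ (s * s) * (2 * s) ^ m) = C * (2 * (2 * (s * s))) ^ h := by
    rw [hC, hm, pow_mul (2 * s) 2 h, show (2 * s) ^ 2 = 2 * (2 * (s * s)) by ring]
    ring
  have hss1 : 1 ≤ s * s := Nat.one_le_iff_ne_zero.mpr (by positivity)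
  have hss1' : 1 ≤ s * s := hss1
  have h3 : C * (2 * (2 * (s * s))) ^ h < (2 * (2 * (s * s)) + 2) ^ h :=
    key C (2 * (2 * (s * s))) h (by omega) (le_of_eq (by rw [hh, hq]; ring))
  have e1 : (2:ℕ) ^ (2 * t + 1) = 4 * 2 ^ (2 * t - 1) := by
    rw [show 2 * t + 1 = (2 * t - 1) + 2 by omega, pow_add]
    ring
  have h4 : 2 * (2 * (s * s)) + 2 ≤ 2 ^ (2 * t + 1) := by omega
  have h5 : (2 * (2 * (s * s)) + 2) ^ h ≤ 2 ^ (m * t + h) := by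
    calc (2 * (2 * (s * s)) + 2) ^ h ≤ (2 ^ (2 * t + 1)) ^ h := Nat.pow_le_pow_left h4 h
      _ = 2 ^ ((2 * t + 1) * h) := by rw [← pow_mul]
      _ = 2 ^ (m * t + h) := by rw [hm]; congr 1; ring
  calc ∑ n ∈ Finset.range (s + 1), 2 ^ (n * n) * (n ^ m * 2 ^ m)
      ≤ C * (2 * (2 * (s * s))) ^ h := by rw [← h2]; exact h1
    _ < (2 * (2 * (s * s)) + 2) ^ h := h3
    _ ≤ 2 ^ (m * t + h) := h5

theorem case_even (t : ℕ) (ht : 4 ≤ t) :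
    ∃ (m : ℕ) (_ : NeZero m) (G' : OrientedGraph (ZMod m)),
      G'.toSimpleGraph.Connected ∧
      (∀ v, (G'.toSimpleGraph.neighborSet v).ncard ≤ 2 * t) ∧
      2 ^ (t - 1) ≤ G'.pushableChromatic := by
  set K := 2 ^ (t - 1) with hK
  have hK2 : 2 ≤ K := by
    have : (2:ℕ) ^ 1 ≤ 2 ^ (t - 1) := Nat.pow_le_pow_right (by norm_num) (by omega)
    simpa using this
  set C := K * 2 ^ ((K - 1) * (K - 1)) with hC
  set a := 2 * (K - 1) with ha
  set m := C * a with hm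
  have hCK : K ≤ C := Nat.le_mul_of_pos_right _ (Nat.pow_pos (by norm_num))
  have ha2 : 2 ≤ a := by omega
  haveI : NeZero m := ⟨by positivity⟩
  have hKt : a + 2 = 2 ^ t := by
    have h6 : a + 2 = 2 * K := by omega
    rw [h6, hK, ← pow_succ']
    congr 1
    omega
  have hmbig : 2 ^ t ≤ m := by
    have h1 : 2 ^ t = K * 2 := by rw [hK, ← pow_succ]; congr 1; omega
    rw [h1, hm]
    exact Nat.mul_le_mul hCK ha2
  have h2t : 2 * t + 2 ≤ m := by
    have h1 := two_mul_lt_two_pow (t - 1) (by omega)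
    have h2 : (2:ℕ) ^ t = 2 ^ (t - 1) * 2 := by
      rw [← pow_succ]; congr 1; omega
    omega
  obtain ⟨G', hconn, hdeg, hchrom⟩ :=
    construction m t 0 (by omega) h2t (Or.inl rfl) K
      (even_numeric K t C a m hK2 hC ha hm hKt)
  exact ⟨m, inferInstance, G', hconn, fun v => by simpa using hdeg v, hchrom⟩

theorem case_odd (t : ℕ) (ht : 4 ≤ t) :
    ∃ (m : ℕ) (_ : NeZero m) (G' : OrientedGraph (ZMod m)),
      G'.toSimpleGraph.Connected ∧
      (∀ v, (G'.toSimpleGraph.neighborSet v).ncard ≤ 2 * t + 1) ∧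
      Nat.sqrt (2 ^ (2 * t - 1)) + 1 ≤ G'.pushableChromatic := by
  set s := Nat.sqrt (2 ^ (2 * t - 1)) with hs
  have hslb : 2 ^ (t - 1) ≤ s := by
    calc 2 ^ (t - 1) = Nat.sqrt ((2 ^ (t - 1)) ^ 2) := (Nat.sqrt_eq' _).symm
      _ ≤ s := Nat.sqrt_le_sqrt
          (by rw [← pow_mul]; exact Nat.pow_le_pow_right (by norm_num) (by omega))
  have hs4 : 4 ≤ s := by
    have : (2:ℕ) ^ 2 ≤ 2 ^ (t - 1) := Nat.pow_le_pow_right (by norm_num) (by omega)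
    omega
  have hnsq : s * s ≠ 2 ^ (2 * t - 1) := by
    intro heq
    have hdvd : s ∣ 2 ^ (2 * t - 1) := ⟨s, heq.symm⟩
    obtain ⟨j, hj, hsj⟩ := (Nat.dvd_prime_pow Nat.prime_two).mp hdvd
    rw [hsj, ← pow_add] at heq
    have := Nat.pow_right_injective (le_refl 2) heq
    omega
  have hsq : s * s ≤ 2 ^ (2 * t - 1) := by
    have := Nat.sqrt_le' (2 ^ (2 * t - 1))
    rw [pow_two] at this
    exact this
  have hsq' : s * s + 1 ≤ 2 ^ (2 * t - 1) := by omega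
  set C := (s + 1) * 2 ^ (s * s) with hC
  set q := 2 * (s * s) with hq
  set h := C * q with hh
  set m := 2 * h with hm
  have hCK : s + 1 ≤ C := Nat.le_mul_of_pos_right _ (Nat.pow_pos (by norm_num))
  have hq2 : 2 ≤ q := by
    have h1 : 1 * 1 ≤ s * s := Nat.mul_le_mul (by omega) (by omega)
    omega
  have hth : t < h := by
    have h1 : t < s + 1 := by
      have h2 := two_mul_lt_two_pow (t - 1) (by omega)
      omega
    have h2 : s + 1 ≤ h := by
      calc s + 1 ≤ C := hCK
        _ = C * 1 := (Nat.mul_one C).symm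
        _ ≤ C * q := Nat.mul_le_mul_left _ (by omega)
    omega
  haveI : NeZero m := ⟨by positivity⟩
  have h2t : 2 * t + 2 ≤ m := by omega
  obtain ⟨G', hconn, hdeg, hchrom⟩ :=
    construction m t h (by omega) h2t (Or.inr ⟨hm, hth⟩) (s + 1)
      (odd_numeric s t C q h m (by omega) (by omega) hC hq hh hm hsq')
  refine ⟨m, inferInstance, G', hconn, fun v => ?_, hchrom⟩
  have h3 := hdeg v
  rw [if_neg (by omega : ¬ h = 0)] at h3
  exact h3

end PushAux

/-- For every `Δ ≥ 29`, there is a connected finite simple graph with maximum degree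
at most `Δ` and an orientation of it with pushable chromatic number at least
`2^(Δ/2 - 1)`. -/
theorem pushableChromatic_lower_of_maxDegree
    (Δ : ℕ) (hΔ : 29 ≤ Δ) :
    ∃ (V : Type) (_ : Fintype V) (G : SimpleGraph V) (G' : OrientedGraph V),
      G.Connected ∧ (∀ v, (G.neighborSet v).ncard ≤ Δ) ∧ G'.toSimpleGraph = G ∧
      (2 : ℝ) ^ ((Δ : ℝ) / 2 - 1) ≤ (G'.pushableChromatic : ℝ) := by
  rcases Nat.even_or_odd Δ with ⟨t, hΔ2⟩ | ⟨t, hΔ2⟩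
  · -- Δ = t + t
    have ht : 15 ≤ t := by omega
    obtain ⟨m, hNZ, G', hconn, hdeg, hchrom⟩ := PushAux.case_even t (by omega)
    haveI := hNZ
    refine ⟨ZMod m, inferInstance, G'.toSimpleGraph, G', hconn,
      fun v => by have := hdeg v; omega, rfl, ?_⟩
    have hexp : ((Δ : ℝ) / 2 - 1) = ((t - 1 : ℕ) : ℝ) := by
      rw [hΔ2]
      push_cast [Nat.cast_sub (show 1 ≤ t by omega)]
      ring
    rw [hexp, Real.rpow_natCast]
    have h1 : ((2 ^ (t - 1) : ℕ) : ℝ) ≤ (G'.pushableChromatic : ℝ) := Nat.cast_le.mpr hchrom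
    push_cast at h1
    exact h1
  · -- Δ = 2 * t + 1
    have ht : 14 ≤ t := by omega
    obtain ⟨m, hNZ, G', hconn, hdeg, hchrom⟩ := PushAux.case_odd t (by omega)
    haveI := hNZ
    refine ⟨ZMod m, inferInstance, G'.toSimpleGraph, G', hconn,
      fun v => by have := hdeg v; omega, rfl, ?_⟩
    set x := (2 : ℝ) ^ ((Δ : ℝ) / 2 - 1) with hx
    set K := Nat.sqrt (2 ^ (2 * t - 1)) + 1 with hK
    have hxK : x ≤ (K : ℝ) := by
      have hxpos : 0 < x := Real.rpow_pos_of_pos (by norm_num) _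
      have hx2 : x * x = ((2 ^ (2 * t - 1) : ℕ) : ℝ) := by
        rw [hx, ← Real.rpow_add (by norm_num : (0:ℝ) < 2)]
        have hexp : ((Δ : ℝ) / 2 - 1) + ((Δ : ℝ) / 2 - 1) = ((2 * t - 1 : ℕ) : ℝ) := by
          rw [hΔ2]
          push_cast [Nat.cast_sub (show 1 ≤ 2 * t by omega)]
          ring
        rw [hexp, Real.rpow_natCast]
        push_cast
        ring
      have hK2 : ((2 ^ (2 * t - 1) : ℕ) : ℝ) < (K : ℝ) * (K : ℝ) := by
        have h2 := Nat.lt_succ_sqrt (2 ^ (2 * t - 1))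
        rw [hK]
        exact_mod_cast h2
      have h0 : (0:ℝ) ≤ (K : ℝ) := Nat.cast_nonneg K
      by_contra hc
      push_neg at hc
      nlinarith
    exact hxK.trans (Nat.cast_le.mpr hchrom)
end

section
/- For every integer Δ ≥ 29, every orientation of every connected finite simple graph with maximum degree at most Δ has oriented chromatic number at most (Δ−3)·(Δ−1)·2^Δ + 2. -/
namespace OCNNum

lemma log20 : Real.log 20 ≤ 3 := by
  have h1 : (20:ℝ) ≤ Real.exp 3 := by
    have h := Real.exp_one_gt_d9
    have h3 : Real.exp 3 = (Real.exp 1)^3 := by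
      rw [← Real.exp_nat_mul]; norm_num
    have h2 : (20:ℝ) ≤ (2.7182818283:ℝ)^3 := by norm_num
    rw [h3]
    calc (20:ℝ) ≤ (2.7182818283:ℝ)^3 := h2
      _ ≤ (Real.exp 1)^3 := by
          apply pow_le_pow_left₀ (by norm_num) h.le
  calc Real.log 20 ≤ Real.log (Real.exp 3) :=
        Real.log_le_log (by norm_num) h1
    _ = 3 := Real.log_exp 3

lemma log_le_div20 {x : ℝ} (hx : 0 < x) : Real.log x ≤ x/20 + 2 := by
  have h1 : Real.log x = Real.log (x/20) + Real.log 20 := by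
    rw [← Real.log_mul (by positivity) (by norm_num)]
    norm_num
  rw [h1]
  have h2 : Real.log (x/20) ≤ x/20 - 1 := Real.log_le_sub_one_of_pos (by positivity)
  have := log20
  linarith

lemma factorial_bound (n : ℕ) : (n:ℝ)^n ≤ (n.factorial : ℝ) * Real.exp n := by
  induction n with
  | zero => simp
  | succ n ih =>
    rcases Nat.eq_zero_or_pos n with rfl | hn
    · simp [Nat.factorial]
    · have hn' : (0:ℝ) < n := by exact_mod_cast hn
      have key : ((n:ℝ)+1)^n ≤ (n:ℝ)^n * Real.exp 1 := by
        have h1 : (n:ℝ)+1 ≤ n * Real.exp (1/n) := by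
          have := Real.add_one_le_exp (1/(n:ℝ))
          calc (n:ℝ)+1 = n * (1/n + 1) := by field_simp; ring
            _ ≤ n * Real.exp (1/n) := by nlinarith
        calc ((n:ℝ)+1)^n ≤ (n * Real.exp (1/n))^n := by
              apply pow_le_pow_left₀ (by positivity) h1
          _ = (n:ℝ)^n * (Real.exp (1/n))^n := mul_pow _ _ _
          _ = (n:ℝ)^n * Real.exp 1 := by
              rw [← Real.exp_nat_mul]
              congr 1
              field_simp
      have : ((n:ℝ)+1)^(n+1) = ((n:ℝ)+1) * ((n:ℝ)+1)^n := by ring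
      push_cast
      rw [this]
      calc ((n:ℝ)+1) * ((n:ℝ)+1)^n ≤ ((n:ℝ)+1) * ((n:ℝ)^n * Real.exp 1) := by
            apply mul_le_mul_of_nonneg_left key (by positivity)
        _ ≤ ((n:ℝ)+1) * ((n.factorial : ℝ) * Real.exp n * Real.exp 1) := by
            apply mul_le_mul_of_nonneg_left _ (by positivity)
            apply mul_le_mul_of_nonneg_right ih (Real.exp_pos 1).le
        _ = ((n+1).factorial : ℝ) * Real.exp (n+1) := by
            rw [Nat.factorial_succ]
            push_cast
            rw [Real.exp_add]
            ring

lemma log_factorial (n : ℕ) (hn : 0 < n) :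
    (n:ℝ) * Real.log n - n ≤ Real.log (n.factorial) := by
  have h1 := factorial_bound n
  have hn' : (0:ℝ) < n := by exact_mod_cast hn
  have h2 : Real.log ((n:ℝ)^n) ≤ Real.log ((n.factorial : ℝ) * Real.exp n) :=
    Real.log_le_log (by positivity) h1
  rw [Real.log_pow, Real.log_mul (by positivity) (Real.exp_ne_zero _), Real.log_exp] at h2
  linarith

end OCNNum

namespace Cases

variable (Δ : ℕ)

-- Convenient real abbreviations
noncomputable def D : ℝ := (Δ : ℝ)
noncomputable def Mr : ℝ := ((Δ-3)*(Δ-1)*2^(Δ-1) : ℕ)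

lemma hD29 (hΔ : 29 ≤ Δ) : (29:ℝ) ≤ D Δ := by rw [D]; exact_mod_cast hΔ

lemma hMr (hΔ : 29 ≤ Δ) : Mr Δ = (D Δ - 3) * (D Δ - 1) * 2^(Δ-1) := by
  rw [Mr, D]
  push_cast [Nat.cast_sub (by omega : 3 ≤ Δ), Nat.cast_sub (by omega : 1 ≤ Δ)]
  ring

lemma hlogM (hΔ : 29 ≤ Δ) :
    Real.log (Mr Δ) ≤ (D Δ - 1) * Real.log 2 + 2 * Real.log (D Δ) := by
  have hD := hD29 Δ hΔ
  have h3 : (0:ℝ) < D Δ - 3 := by linarith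
  have h1 : (0:ℝ) < D Δ - 1 := by linarith
  rw [hMr Δ hΔ, Real.log_mul (by positivity) (by positivity), Real.log_pow]
  have hq : (D Δ - 3) * (D Δ - 1) ≤ (D Δ)^2 := by nlinarith
  have hlq : Real.log ((D Δ - 3) * (D Δ - 1)) ≤ 2 * Real.log (D Δ) := by
    calc Real.log ((D Δ - 3) * (D Δ - 1)) ≤ Real.log ((D Δ)^2) :=
          Real.log_le_log (by positivity) hq
      _ = 2 * Real.log (D Δ) := by rw [Real.log_pow]; norm_num
  have hc : ((Δ-1:ℕ):ℝ) = D Δ - 1 := by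
    rw [D]; push_cast [Nat.cast_sub (by omega : 1 ≤ Δ)]; ring
  rw [hc] at *
  linarith [Real.log_nonneg (by norm_num : (1:ℝ) ≤ 2)]

lemma hlogD (hΔ : 29 ≤ Δ) : Real.log (D Δ) ≤ D Δ/20 + 2 :=
  OCNNum.log_le_div20 (by have := hD29 Δ hΔ; linarith)

lemma hlog2 : Real.log 2 ≤ 0.6932 := le_of_lt (lt_trans Real.log_two_lt_d9 (by norm_num))

-- 2Δ ≤ 2^Δ
lemma two_mul_le_pow (hΔ : 29 ≤ Δ) : 2*D Δ ≤ 2^Δ := by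
  rw [D]
  have h1 : Δ ≤ 2^(Δ-1) := by
    have := Nat.lt_two_pow_self (n := Δ - 1); omega
  have h2 : 2*Δ ≤ 2^Δ := by
    calc 2*Δ ≤ 2*2^(Δ-1) := by omega
      _ = 2^Δ := by rw [← pow_succ']; congr 1; omega
  exact_mod_cast h2

lemma four_mul_le_pow : ∀ n, 6 ≤ n → 4*n ≤ 2^n := by
  intro n hn
  induction n, hn using Nat.le_induction with
  | base => norm_num
  | succ n hn ih =>
    have h4 : 4 ≤ 2^n := by omega
    rw [pow_succ]
    omega

-- 8(Δ-1) ≤ 2^Δ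
lemma eight_mul_le_pow (hΔ : 29 ≤ Δ) : (8*(D Δ - 1):ℝ) ≤ 2^Δ := by
  have h1 : 4*(Δ-1) ≤ 2^(Δ-1) := four_mul_le_pow (Δ-1) (by omega)
  have h2 : 8*(Δ-1) ≤ 2^Δ := by
    have h3 : (2:ℕ)^Δ = 2*2^(Δ-1) := by
      rw [← pow_succ']; congr 1; omega
    omega
  have h4 : ((8*(Δ-1):ℕ):ℝ) = 8*(D Δ - 1) := by
    rw [D]; push_cast [Nat.cast_sub (by omega : 1 ≤ Δ)]; ring
  rw [← h4]
  calc ((8*(Δ-1):ℕ):ℝ) ≤ ((2^Δ : ℕ):ℝ) := by exact_mod_cast h2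
    _ = 2^Δ := by push_cast; ring

lemma log_Mr_nonneg (hΔ : 29 ≤ Δ) : 0 ≤ Real.log (Mr Δ) := by
  apply Real.log_nonneg
  rw [hMr Δ hΔ]
  have hD := hD29 Δ hΔ
  have h1 : (1:ℝ) ≤ 2^(Δ-1) := by
    have : (1:ℕ) ≤ 2^(Δ-1) := Nat.one_le_two_pow
    exact_mod_cast this
  have h2 : (1:ℝ) ≤ (D Δ - 3)*(D Δ - 1) := by nlinarith
  nlinarith [mul_le_mul h2 h1 (by norm_num) (by linarith : (0:ℝ) ≤ (D Δ - 3)*(D Δ - 1))]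

lemma case_top (hΔ : 29 ≤ Δ) :
    (D Δ) * Real.log (Mr Δ) + (D Δ) * Real.log 2 + Real.log 2 + Real.log (D Δ)
      ≤ Real.log (Δ.factorial) + (2/2^Δ) * (Mr Δ - D Δ) := by
  have hD := hD29 Δ hΔ
  have hx := hlogM Δ hΔ
  have ht := hlog2
  have ht0 : (0:ℝ) ≤ Real.log 2 := Real.log_nonneg (by norm_num)
  have hd := hlogD Δ hΔ
  have hd0 : (0:ℝ) ≤ Real.log (D Δ) := Real.log_nonneg (by linarith)
  have hfac : D Δ * Real.log (D Δ) - D Δ ≤ Real.log (Δ.factorial) := by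
    have := OCNNum.log_factorial Δ (by omega)
    have hcast : ((Δ:ℕ):ℝ) = D Δ := rfl
    rw [hcast] at this
    exact this
  have hpow : (2:ℝ)^Δ = 2*2^(Δ-1) := by
    rw [← pow_succ']
    congr 1
    omega
  have hpowpos : (0:ℝ) < 2^Δ := by positivity
  have htail : (D Δ - 3)*(D Δ - 1) - 1 ≤ (2/2^Δ) * (Mr Δ - D Δ) := by
    have h1 : (2:ℝ)/2^Δ * Mr Δ = (D Δ - 3)*(D Δ - 1) := by
      rw [hMr Δ hΔ, hpow]
      field_simp
    have h2 : (2:ℝ)/2^Δ * D Δ ≤ 1 := by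
      rw [div_mul_eq_mul_div, div_le_one hpowpos]
      have := two_mul_le_pow Δ hΔ
      linarith
    have h3 : (2:ℝ)/2^Δ * (Mr Δ - D Δ) = 2/2^Δ * Mr Δ - 2/2^Δ * D Δ := by ring
    rw [h3, h1]
    linarith
  have e1 : D Δ * Real.log (Mr Δ) ≤
      D Δ * ((D Δ - 1) * Real.log 2 + 2 * Real.log (D Δ)) :=
    mul_le_mul_of_nonneg_left hx (by linarith)
  have e2 : (D Δ)^2 * Real.log 2 ≤ (D Δ)^2 * 0.6932 :=
    mul_le_mul_of_nonneg_left ht (by positivity)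
  have e3 : (D Δ + 1) * Real.log (D Δ) ≤ (D Δ + 1) * (D Δ/20 + 2) :=
    mul_le_mul_of_nonneg_left hd (by linarith)
  nlinarith [sq_nonneg (D Δ - 29), mul_nonneg (by linarith : (0:ℝ) ≤ D Δ - 29)
    (by linarith : (0:ℝ) ≤ D Δ - 29)]

lemma case_second (hΔ : 29 ≤ Δ) :
    (D Δ - 1) * Real.log (Mr Δ) + (D Δ - 1) * Real.log 2
        + (D Δ - 1) * Real.log (Mr Δ) + Real.log 2 + Real.log (D Δ)
      ≤ Real.log ((Δ-1).factorial) + Real.log ((Δ-1).factorial)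
        + (2/2^(Δ-1)) * (Mr Δ - (D Δ - 1) - (D Δ - 1)) := by
  have hD := hD29 Δ hΔ
  have hx := hlogM Δ hΔ
  have ht := hlog2
  have ht0 : (0:ℝ) ≤ Real.log 2 := Real.log_nonneg (by norm_num)
  have hd := hlogD Δ hΔ
  have hd0 : (0:ℝ) ≤ Real.log (D Δ) := Real.log_nonneg (by linarith)
  have hcast : ((Δ-1:ℕ):ℝ) = D Δ - 1 := by
    rw [D]; push_cast [Nat.cast_sub (by omega : 1 ≤ Δ)]; ring
  have hfac : (D Δ - 1) * Real.log (D Δ - 1) - (D Δ - 1) ≤ Real.log ((Δ-1).factorial) := by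
    have := OCNNum.log_factorial (Δ-1) (by omega)
    rw [hcast] at this
    exact this
  have hld1 : Real.log (D Δ) - 1/28 ≤ Real.log (D Δ - 1) := by
    have h1 : Real.log (D Δ) - Real.log (D Δ - 1) = Real.log (D Δ / (D Δ - 1)) := by
      rw [Real.log_div (by linarith) (by linarith)]
    have h2 : Real.log (D Δ / (D Δ - 1)) ≤ D Δ / (D Δ - 1) - 1 :=
      Real.log_le_sub_one_of_pos (div_pos (by linarith) (by linarith))
    have hne : D Δ - 1 ≠ 0 := by linarith
    have h3 : D Δ / (D Δ - 1) - 1 = 1/(D Δ - 1) := by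
      field_simp
      ring
    have h4 : 1/(D Δ - 1) ≤ 1/28 := by
      rw [div_le_div_iff₀ (by linarith) (by norm_num)]
      linarith
    linarith
  have hpowpos : (0:ℝ) < 2^(Δ-1) := by positivity
  have htail : 2*((D Δ - 3)*(D Δ - 1)) - 1 ≤
      (2/2^(Δ-1)) * (Mr Δ - (D Δ - 1) - (D Δ - 1)) := by
    have h1 : (2:ℝ)/2^(Δ-1) * Mr Δ = 2*((D Δ - 3)*(D Δ - 1)) := by
      rw [hMr Δ hΔ]
      field_simp
    have hpow : (2:ℝ)^Δ = 2*2^(Δ-1) := by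
      rw [← pow_succ']; congr 1; omega
    have h2 : (2:ℝ)/2^(Δ-1) * (2*(D Δ - 1)) ≤ 1 := by
      rw [div_mul_eq_mul_div, div_le_one hpowpos]
      have := eight_mul_le_pow Δ hΔ
      rw [hpow] at this
      linarith
    have h3 : (2:ℝ)/2^(Δ-1) * (Mr Δ - (D Δ - 1) - (D Δ - 1)) =
        2/2^(Δ-1) * Mr Δ - 2/2^(Δ-1) * (2*(D Δ - 1)) := by ring
    rw [h3, h1]
    linarith
  have e1 : 2*(D Δ - 1) * Real.log (Mr Δ) ≤
      2*(D Δ - 1) * ((D Δ - 1) * Real.log 2 + 2 * Real.log (D Δ)) :=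
    mul_le_mul_of_nonneg_left hx (by linarith)
  have e2 : 2*(D Δ - 1)^2 * Real.log 2 ≤ 2*(D Δ - 1)^2 * 0.6932 :=
    mul_le_mul_of_nonneg_left ht (by positivity)
  have e3 : (2*(D Δ - 1) + 1) * Real.log (D Δ) ≤ (2*(D Δ - 1) + 1) * (D Δ/20 + 2) :=
    mul_le_mul_of_nonneg_left hd (by linarith)
  have e4 : (D Δ) * Real.log 2 ≤ (D Δ) * 0.6932 :=
    mul_le_mul_of_nonneg_left ht (by linarith)
  nlinarith [sq_nonneg (D Δ - 29), mul_nonneg (by linarith : (0:ℝ) ≤ D Δ - 29)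
    (by linarith : (0:ℝ) ≤ D Δ - 29)]

-- middle range: induction statement
lemma Sr (hΔ : 29 ≤ Δ) : ∀ r : ℕ, 1 ≤ r →
    (D Δ - 1)*((r:ℝ)+2)*((D Δ - 1)*Real.log 2 + 2*Real.log (D Δ) + 1)
      + D Δ*Real.log 2 + Real.log 2 + Real.log (D Δ)
    ≤ 2^(r+1)*((D Δ - 3)*(D Δ - 1)) := by
  have hD := hD29 Δ hΔ
  have ht := hlog2
  have ht0 : (0:ℝ) ≤ Real.log 2 := Real.log_nonneg (by norm_num)
  have hd := hlogD Δ hΔ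
  have hd0 : (0:ℝ) ≤ Real.log (D Δ) := Real.log_nonneg (by linarith)
  have hstep : (D Δ - 1)*((D Δ - 1)*Real.log 2 + 2*Real.log (D Δ) + 1)
      ≤ 4*((D Δ - 3)*(D Δ - 1)) := by
    have e2 : (D Δ - 1)^2 * Real.log 2 ≤ (D Δ - 1)^2 * 0.6932 :=
      mul_le_mul_of_nonneg_left ht (by positivity)
    have e3 : 2*(D Δ - 1) * Real.log (D Δ) ≤ 2*(D Δ - 1) * (D Δ/20 + 2) :=
      mul_le_mul_of_nonneg_left hd (by linarith)
    nlinarith [sq_nonneg (D Δ - 29), mul_nonneg (by linarith : (0:ℝ) ≤ D Δ - 29)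
      (by linarith : (0:ℝ) ≤ D Δ - 29)]
  intro r hr
  induction r, hr using Nat.le_induction with
  | base =>
    have e2 : 3*(D Δ - 1)^2 * Real.log 2 ≤ 3*(D Δ - 1)^2 * 0.6932 :=
      mul_le_mul_of_nonneg_left ht (by positivity)
    have e3 : (6*(D Δ - 1) + 1) * Real.log (D Δ) ≤ (6*(D Δ - 1) + 1) * (D Δ/20 + 2) :=
      mul_le_mul_of_nonneg_left hd (by linarith)
    have e4 : (D Δ + 1) * Real.log 2 ≤ (D Δ + 1) * 0.6932 :=
      mul_le_mul_of_nonneg_left ht (by linarith)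
    norm_num
    nlinarith [sq_nonneg (D Δ - 29), mul_nonneg (by linarith : (0:ℝ) ≤ D Δ - 29)
      (by linarith : (0:ℝ) ≤ D Δ - 29)]
  | succ r hr ih =>
    have h4 : (4:ℝ) ≤ 2^(r+1) := by
      calc (4:ℝ) = 2^2 := by norm_num
        _ ≤ 2^(r+1) := by
            apply pow_le_pow_right₀ (by norm_num)
            omega
    have hQ0 : (0:ℝ) ≤ (D Δ - 3)*(D Δ - 1) := by nlinarith
    have h5 : (D Δ - 1)*((D Δ - 1)*Real.log 2 + 2*Real.log (D Δ) + 1) ≤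
        2^(r+1)*((D Δ - 3)*(D Δ - 1)) := by
      calc (D Δ - 1)*((D Δ - 1)*Real.log 2 + 2*Real.log (D Δ) + 1)
          ≤ 4*((D Δ - 3)*(D Δ - 1)) := hstep
        _ ≤ 2^(r+1)*((D Δ - 3)*(D Δ - 1)) := by
            apply mul_le_mul_of_nonneg_right h4 hQ0
    have hpow : (2:ℝ)^(r+1+1) = 2*2^(r+1) := by rw [pow_succ]; ring
    push_cast
    push_cast at ih
    nlinarith [ih, h5]

lemma key (hΔ : 29 ≤ Δ) (j : ℕ) (h2 : 2 ≤ j) (hjΔ : j ≤ Δ) :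
    (j:ℝ) * Real.log (Mr Δ) + j * Real.log 2
      + (((Δ-j)*(Δ-1) : ℕ):ℝ) * Real.log (Mr Δ) + Real.log 2 + Real.log (D Δ)
    ≤ Real.log (j.factorial) + Real.log ((((Δ-j)*(Δ-1) : ℕ)).factorial)
      + (2/2^j) * (Mr Δ - j - (((Δ-j)*(Δ-1) : ℕ):ℝ)) := by
  have hD := hD29 Δ hΔ
  have ht0 : (0:ℝ) ≤ Real.log 2 := Real.log_nonneg (by norm_num)
  have hd0 : (0:ℝ) ≤ Real.log (D Δ) := Real.log_nonneg (by linarith)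
  have hx0 := log_Mr_nonneg Δ hΔ
  have hcast1 : ((Δ-1:ℕ):ℝ) = D Δ - 1 := by
    rw [D]; push_cast [Nat.cast_sub (by omega : 1 ≤ Δ)]; ring
  rcases eq_or_lt_of_le hjΔ with rfl | hlt
  · -- j = Δ
    have h := case_top j hΔ
    unfold D at h ⊢
    simp only [Nat.sub_self, Nat.zero_mul, Nat.cast_zero, Nat.factorial_zero,
      Nat.cast_one, Real.log_one, sub_zero, add_zero, zero_mul]
    linarith
  rcases eq_or_lt_of_le (by omega : j ≤ Δ - 1) with hj1 | hlt2
  · -- j = Δ - 1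
    subst hj1
    have h := case_second Δ hΔ
    have e1 : Δ - (Δ-1) = 1 := by omega
    rw [e1, one_mul, hcast1]
    exact h
  · -- 2 ≤ j ≤ Δ - 2
    set r := Δ - 1 - j with hr
    have hr1 : 1 ≤ r := by omega
    have hSr := Sr Δ hΔ r hr1
    set x := Real.log (Mr Δ)
    set t := Real.log 2
    set d := Real.log (D Δ)
    set L : ℝ := (D Δ - 1)*t + 2*d with hL
    have hx := hlogM Δ hΔ
    have hcastK : (((Δ-j)*(Δ-1) : ℕ):ℝ) = (D Δ - j)*(D Δ - 1) := by
      rw [D]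
      push_cast [Nat.cast_sub (by omega : j ≤ Δ), Nat.cast_sub (by omega : 1 ≤ Δ)]
      ring
    have hcastr : ((r:ℕ):ℝ) = D Δ - 1 - j := by
      rw [hr, D]
      push_cast [Nat.cast_sub (by omega : j ≤ Δ - 1), Nat.cast_sub (by omega : 1 ≤ Δ)]
      ring
    set K : ℝ := (((Δ-j)*(Δ-1) : ℕ):ℝ) with hK
    have hjD : (j:ℝ) ≤ D Δ - 1 := by
      rw [D]
      have : (j:ℝ) ≤ ((Δ-1:ℕ):ℝ) := by exact_mod_cast (by omega : j ≤ Δ - 1)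
      rw [hcast1] at this
      rw [D] at this
      exact this
    have hK0 : (0:ℝ) ≤ K := by rw [hK]; positivity
    have hcount : (j:ℝ) + K ≤ (D Δ - 1)*((r:ℝ)+2) := by
      rw [hcastK, hcastr]
      nlinarith
    have hflog1 : (0:ℝ) ≤ Real.log (j.factorial) := by
      apply Real.log_nonneg
      exact_mod_cast Nat.one_le_iff_ne_zero.2 (Nat.factorial_ne_zero j)
    have hflog2 : (0:ℝ) ≤ Real.log ((((Δ-j)*(Δ-1) : ℕ)).factorial) := by
      apply Real.log_nonneg
      exact_mod_cast Nat.one_le_iff_ne_zero.2 (Nat.factorial_ne_zero _)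
    -- tail bound
    have hpow2j : (0:ℝ) < 2^j := by positivity
    have htail : 2^(r+1)*((D Δ - 3)*(D Δ - 1)) - ((j:ℝ) + K) ≤
        (2/2^j) * (Mr Δ - j - K) := by
      have hsplit : (2:ℝ)^(Δ-1) = 2^j * 2^r := by
        rw [← pow_add]
        congr 1
        omega
      have h1 : (2:ℝ)/2^j * Mr Δ = 2^(r+1)*((D Δ - 3)*(D Δ - 1)) := by
        rw [hMr Δ hΔ, hsplit]
        field_simp
        ring
      have h2 : (2:ℝ)/2^j ≤ 1 := by
        rw [div_le_one hpow2j]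
        calc (2:ℝ) = 2^1 := by norm_num
          _ ≤ 2^j := by
              apply pow_le_pow_right₀ (by norm_num)
              omega
      have h3 : (2:ℝ)/2^j * ((j:ℝ) + K) ≤ (j:ℝ) + K := by
        have hjK0 : (0:ℝ) ≤ (j:ℝ) + K := by positivity
        nlinarith
      have h4 : (2:ℝ)/2^j * (Mr Δ - j - K) = 2/2^j * Mr Δ - 2/2^j * ((j:ℝ) + K) := by
        ring
      rw [h4, h1]
      linarith
    -- main count bound
    have hmain : ((j:ℝ) + K)*(x+1) ≤ (D Δ - 1)*((r:ℝ)+2)*(L+1) := by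
      apply mul_le_mul hcount (by rw [hL]; linarith) (by linarith) ?_
      have : (0:ℝ) ≤ (r:ℝ) + 2 := by positivity
      nlinarith
    have hjt : (j:ℝ)*t ≤ D Δ * t := by
      apply mul_le_mul_of_nonneg_right _ ht0
      rw [D]; exact_mod_cast hjΔ
    have hexp : ((j:ℝ)+K)*(x+1) = (j:ℝ)*x + K*x + (j:ℝ) + K := by ring
    linarith [hSr, hmain, htail, hflog1, hflog2, hjt, hexp]

lemma term_bound (hΔ : 29 ≤ Δ) (j : ℕ) (h2 : 2 ≤ j) (hjΔ : j ≤ Δ) :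
    (Mr Δ)^j * 2^j * ((j.factorial : ℝ))⁻¹ * ((Mr Δ)^((Δ-j)*(Δ-1)) *
      (((((Δ-j)*(Δ-1) : ℕ)).factorial : ℝ))⁻¹) *
      Real.exp (-((2/2^j) * (Mr Δ - j - (((Δ-j)*(Δ-1) : ℕ):ℝ)))) ≤ 1/(2*D Δ) := by
  have hD := hD29 Δ hΔ
  have hM0 : (0:ℝ) < Mr Δ := by
    rw [Mr]
    have h1 : 0 < (Δ-3)*(Δ-1)*2^(Δ-1) := by
      have : 0 < 2^(Δ-1) := Nat.pow_pos (by norm_num)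
      have h3 : 0 < Δ - 3 := by omega
      have h1 : 0 < Δ - 1 := by omega
      positivity
    exact_mod_cast h1
  have hf1 : (0:ℝ) < (j.factorial : ℝ) := by exact_mod_cast j.factorial_pos
  have hf2 : (0:ℝ) < ((((Δ-j)*(Δ-1) : ℕ)).factorial : ℝ) := by
    exact_mod_cast Nat.factorial_pos _
  have hLpos : (0:ℝ) < (Mr Δ)^j * 2^j * ((j.factorial : ℝ))⁻¹ * ((Mr Δ)^((Δ-j)*(Δ-1)) *
      (((((Δ-j)*(Δ-1) : ℕ)).factorial : ℝ))⁻¹) *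
      Real.exp (-((2/2^j) * (Mr Δ - j - (((Δ-j)*(Δ-1) : ℕ):ℝ)))) := by positivity
  have hRpos : (0:ℝ) < 1/(2*D Δ) := by positivity
  rw [← Real.exp_log hLpos, ← Real.exp_log hRpos]
  apply Real.exp_le_exp.2
  have hkey := key Δ hΔ j h2 hjΔ
  have hlogL : Real.log ((Mr Δ)^j * 2^j * ((j.factorial : ℝ))⁻¹ * ((Mr Δ)^((Δ-j)*(Δ-1)) *
      (((((Δ-j)*(Δ-1) : ℕ)).factorial : ℝ))⁻¹) *
      Real.exp (-((2/2^j) * (Mr Δ - j - (((Δ-j)*(Δ-1) : ℕ):ℝ))))) =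
      (j:ℝ) * Real.log (Mr Δ) + j * Real.log 2 - Real.log (j.factorial)
      + ((((Δ-j)*(Δ-1) : ℕ)):ℝ) * Real.log (Mr Δ)
      - Real.log ((((Δ-j)*(Δ-1) : ℕ)).factorial)
      - (2/2^j) * (Mr Δ - j - (((Δ-j)*(Δ-1) : ℕ):ℝ)) := by
    rw [Real.log_mul (by positivity) (Real.exp_ne_zero _), Real.log_exp,
      Real.log_mul (by positivity) (by positivity),
      Real.log_mul (by positivity) (by positivity),
      Real.log_mul (by positivity) (by positivity),
      Real.log_mul (by positivity) (by positivity),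
      Real.log_pow, Real.log_pow, Real.log_pow, Real.log_inv, Real.log_inv]
    ring
  have hlogR : Real.log (1/(2*D Δ)) = -(Real.log 2 + Real.log (D Δ)) := by
    rw [one_div, Real.log_inv, Real.log_mul (by norm_num) (by positivity)]
  rw [hlogL, hlogR]
  linarith

lemma m_large' (hΔ : 29 ≤ Δ) : Δ * (Δ - 1) + 1 ≤ (Δ-3)*(Δ-1)*2^(Δ-1) := by
  have h2 : 2 ^ (Δ - 1) ≥ Δ := by
    have := Nat.lt_two_pow_self (n := Δ - 1); omega
  have h3 : (Δ-3)*(Δ-1)*2^(Δ-1) ≥ (Δ-3)*(Δ-1)*Δ := Nat.mul_le_mul_left _ h2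
  have h4 : (Δ-3)*(Δ-1)*Δ ≥ Δ*(Δ-1)+1 := by
    obtain ⟨a, rfl⟩ := Nat.exists_eq_add_of_le hΔ
    have e1 : 29 + a - 3 = 26 + a := by omega
    have e2 : 29 + a - 1 = 28 + a := by omega
    rw [e1, e2]
    have h5 : 2*((28+a)*(29+a)) ≤ (26+a)*(28+a)*(29+a) := by
      have h6 : 2 ≤ 26 + a := by omega
      calc 2*((28+a)*(29+a)) ≤ (26+a)*((28+a)*(29+a)) := Nat.mul_le_mul_right _ h6
        _ = (26+a)*(28+a)*(29+a) := by ring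
    nlinarith
  omega

lemma numeric_main (hΔ : 29 ≤ Δ) :
    ∑ j ∈ Finset.Icc 1 Δ, (((Δ-3)*(Δ-1)*2^(Δ-1)).choose j * 2 ^ j *
      ((Δ-3)*(Δ-1)*2^(Δ-1) - j).choose ((Δ-3)*(Δ-1)*2^(Δ-1) - j - (Δ-j)*(Δ-1)) *
      (2 ^ j - 2) ^ ((Δ-3)*(Δ-1)*2^(Δ-1) - j - (Δ-j)*(Δ-1)) *
      2 ^ ((Δ-3)*(Δ-1)*2^(Δ-1) * ((Δ-3)*(Δ-1)*2^(Δ-1)) -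
        j * ((Δ-3)*(Δ-1)*2^(Δ-1) - j - (Δ-j)*(Δ-1)))) <
    2 ^ ((Δ-3)*(Δ-1)*2^(Δ-1) * ((Δ-3)*(Δ-1)*2^(Δ-1))) := by
  have hD := hD29 Δ hΔ
  set M := (Δ-3)*(Δ-1)*2^(Δ-1) with hMdef
  have hM1 : Δ * (Δ - 1) + 1 ≤ M := m_large' Δ hΔ
  have hΔM : Δ ≤ M := by
    have : Δ - 1 ≤ Δ*(Δ-1) := Nat.le_mul_of_pos_left _ (by omega)
    omega
  have hMr_eq : Mr Δ = (M:ℝ) := rfl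
  have hM0 : (0:ℝ) < (M:ℝ) := by
    have : 0 < M := by omega
    exact_mod_cast this
  -- key per-term bound
  have hterm : ∀ j ∈ Finset.Icc 1 Δ,
      ((M.choose j * 2 ^ j * (M - j).choose (M - j - (Δ-j)*(Δ-1)) *
        (2 ^ j - 2) ^ (M - j - (Δ-j)*(Δ-1)) *
        2 ^ (M * M - j * (M - j - (Δ-j)*(Δ-1))) : ℕ) : ℝ) ≤
      2 ^ (M * M) / (2 * D Δ) := by
    intro j hj
    rw [Finset.mem_Icc] at hj
    -- the basic N-arithmetic facts
    have hKj : (Δ-j)*(Δ-1) + j ≤ M := by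
      have h1 : (Δ-j)*(Δ-1) ≤ (Δ-1)*(Δ-1) := Nat.mul_le_mul_right _ (by omega)
      have h2 : (Δ-1)*(Δ-1) + Δ ≤ Δ*(Δ-1) + 1 := by
        obtain ⟨a, ha⟩ : ∃ a, Δ = a+1 := ⟨Δ-1, by omega⟩
        subst ha
        simp only [Nat.add_sub_cancel]
        nlinarith
      omega
    set K := (Δ-j)*(Δ-1) with hKdef
    set E := M - j - K with hEdef
    have hjE : j * E ≤ M * M := Nat.mul_le_mul (by omega) (by omega)
    rcases eq_or_lt_of_le hj.1 with hj1 | hj2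
    · -- j = 1 : the term is zero
      have hE1 : 1 ≤ E := by
        have h1 : K ≤ (Δ-1)*(Δ-1) := Nat.mul_le_mul_right _ (by omega)
        have h2 : (Δ-1)*(Δ-1) + 2 ≤ M := by
          have h3 : (Δ-1)*(Δ-1) < Δ*(Δ-1) :=
            (Nat.mul_lt_mul_right (by omega)).2 (by omega)
          omega
        omega
      rw [← hj1]
      have hz : (2^1 - 2 : ℕ) = 0 := by norm_num
      rw [hz, Nat.zero_pow (by omega), Nat.mul_zero, Nat.zero_mul, Nat.cast_zero]
      positivity
    · -- 2 ≤ j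
      have h2j : 2 ≤ j := hj2
      have hpow2j : (2:ℕ) ≤ 2^j := by
        calc (2:ℕ) = 2^1 := by norm_num
          _ ≤ 2^j := Nat.pow_le_pow_right (by norm_num) (by omega)
      have hEcast : ((E:ℕ):ℝ) = (M:ℝ) - j - K := by
        rw [hEdef]
        push_cast [Nat.cast_sub (by omega : j ≤ M), Nat.cast_sub (by omega : K ≤ M - j)]
        ring
      -- factor bounds
      have b1 : ((M.choose j : ℕ):ℝ) ≤ (M:ℝ)^j * ((j.factorial:ℝ))⁻¹ := by
        have := Nat.choose_le_pow_div (α := ℝ) j M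
        rwa [div_eq_mul_inv] at this
      have b2 : (((M - j).choose E : ℕ):ℝ) ≤ (M:ℝ)^K * ((K.factorial:ℝ))⁻¹ := by
        have hsymm : (M - j).choose E = (M - j).choose K := by
          have : E = (M - j) - K := by omega
          rw [this]
          exact Nat.choose_symm (by omega)
        rw [hsymm]
        have h1 := Nat.choose_le_pow_div (α := ℝ) K (M - j)
        rw [div_eq_mul_inv] at h1
        refine le_trans h1 ?_
        apply mul_le_mul_of_nonneg_right _ (by positivity)
        apply pow_le_pow_left₀ (by positivity)
        exact_mod_cast Nat.sub_le M j
      have hf2pos : (0:ℝ) < 2^j := by positivity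
      have b3 : (((2^j - 2 : ℕ):ℕ):ℝ)^E * (2:ℝ)^(M*M - j*E) ≤
          Real.exp (-((2/2^j) * ((M:ℝ) - j - K))) * 2^(M*M) := by
        have hc2 : (((2^j - 2 : ℕ):ℕ):ℝ) = 2^j - 2 := by
          push_cast [Nat.cast_sub hpow2j]
          ring
        have hps : (2:ℝ)^(M*M - j*E) = 2^(M*M) * ((2:ℝ)^(j*E))⁻¹ :=
          pow_sub₀ (2:ℝ) (by norm_num) hjE
        rw [hc2, hps]
        have hgrp : ((2:ℝ)^j - 2)^E * (2^(M*M) * ((2:ℝ)^(j*E))⁻¹) =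
            (((2:ℝ)^j - 2)^E * ((2:ℝ)^(j*E))⁻¹) * 2^(M*M) := by ring
        rw [hgrp]
        apply mul_le_mul_of_nonneg_right _ (by positivity)
        have hsplit : ((2:ℝ)^j - 2)^E * ((2:ℝ)^(j*E))⁻¹ = ((1 - 2/2^j))^E := by
          rw [pow_mul, ← inv_pow, ← mul_pow]
          congr 1
          field_simp
        rw [hsplit]
        have hexp1 : (1 - 2/2^j) ≤ Real.exp (-(2/2^j)) := by
          have := Real.add_one_le_exp (-(2/2^j))
          linarith
        have hnn : (0:ℝ) ≤ 1 - 2/2^j := by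
          have h1 : (2:ℝ) ≤ 2^j := by exact_mod_cast hpow2j
          have h2 : (2:ℝ)/2^j ≤ 1 := by rw [div_le_one hf2pos]; linarith
          linarith
        calc ((1 - 2/2^j))^E ≤ (Real.exp (-(2/2^j)))^E := pow_le_pow_left₀ hnn hexp1 E
          _ = Real.exp ((E:ℝ) * (-(2/2^j))) := by rw [← Real.exp_nat_mul]
          _ = Real.exp (-((2/2^j) * ((M:ℝ) - j - K))) := by
              rw [hEcast]
              ring_nf
      -- combine
      have htb := term_bound Δ hΔ j h2j hj.2
      rw [hMr_eq] at htb
      have hcast : ((M.choose j * 2 ^ j * (M - j).choose E * (2 ^ j - 2) ^ E *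
          2 ^ (M * M - j * E) : ℕ) : ℝ) =
          ((M.choose j : ℕ):ℝ) * (2:ℝ)^j * (((M - j).choose E : ℕ):ℝ) *
          ((((2^j - 2 : ℕ)):ℕ):ℝ)^E * (2:ℝ)^(M*M - j*E) := by
        push_cast
        ring
      rw [hcast]
      calc ((M.choose j : ℕ):ℝ) * (2:ℝ)^j * (((M - j).choose E : ℕ):ℝ) *
          ((((2^j - 2 : ℕ)):ℕ):ℝ)^E * (2:ℝ)^(M*M - j*E)
          = (((M.choose j : ℕ):ℝ) * (2:ℝ)^j * (((M - j).choose E : ℕ):ℝ)) *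
            (((((2^j - 2 : ℕ)):ℕ):ℝ)^E * (2:ℝ)^(M*M - j*E)) := by ring
        _ ≤ (((M:ℝ)^j * ((j.factorial:ℝ))⁻¹) * (2:ℝ)^j *
              ((M:ℝ)^K * ((K.factorial:ℝ))⁻¹)) *
            (Real.exp (-((2/2^j) * ((M:ℝ) - j - K))) * 2^(M*M)) := by
            apply mul_le_mul _ b3 (by positivity) (by positivity)
            apply mul_le_mul _ b2 (by positivity) (by positivity)
            exact mul_le_mul_of_nonneg_right b1 (by positivity)
        _ = ((M:ℝ)^j * 2^j * ((j.factorial:ℝ))⁻¹ * ((M:ℝ)^K * ((K.factorial:ℝ))⁻¹) *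
              Real.exp (-((2/2^j) * ((M:ℝ) - j - K)))) * 2^(M*M) := by ring
        _ ≤ (1/(2 * D Δ)) * 2^(M*M) := by
            apply mul_le_mul_of_nonneg_right htb (by positivity)
        _ = 2 ^ (M * M) / (2 * D Δ) := by ring
  -- sum up
  have hsum : ((∑ j ∈ Finset.Icc 1 Δ, (M.choose j * 2 ^ j *
      (M - j).choose (M - j - (Δ-j)*(Δ-1)) *
      (2 ^ j - 2) ^ (M - j - (Δ-j)*(Δ-1)) *
      2 ^ (M * M - j * (M - j - (Δ-j)*(Δ-1)))) : ℕ) : ℝ) < 2 ^ (M * M) := by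
    push_cast
    calc ∑ j ∈ Finset.Icc 1 Δ, (((M.choose j : ℕ):ℝ) * 2 ^ j *
          (((M - j).choose (M - j - (Δ-j)*(Δ-1)) : ℕ):ℝ) *
          (((2 ^ j - 2 : ℕ):ℕ):ℝ) ^ (M - j - (Δ-j)*(Δ-1)) *
          2 ^ (M * M - j * (M - j - (Δ-j)*(Δ-1))))
        ≤ ∑ _j ∈ Finset.Icc 1 Δ, (2:ℝ) ^ (M * M) / (2 * D Δ) := by
          apply Finset.sum_le_sum
          intro j hj
          have := hterm j hj
          push_cast at this
          exact this
      _ = (Δ:ℝ) * ((2:ℝ) ^ (M * M) / (2 * D Δ)) := by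
          rw [Finset.sum_const, Nat.card_Icc]
          simp only [Nat.add_sub_cancel, nsmul_eq_mul]
      _ = (2:ℝ) ^ (M * M) / 2 := by
          rw [D]
          field_simp
      _ < (2:ℝ) ^ (M * M) := by
          have : (0:ℝ) < (2:ℝ) ^ (M * M) := by positivity
          linarith
  exact_mod_cast hsum

end Cases


open Finset OrientedGraph
open scoped Classical

namespace OCN

/-! ### The tournament encoded by a boolean matrix -/

variable {m : ℕ}

def dirb (t : Fin m → Fin m → Bool) (u w : Fin m) : Bool := if u < w then t u w else !(t w u)

lemma dirb_swap (t : Fin m → Fin m → Bool) {u w : Fin m} (h : u ≠ w) :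
    dirb t w u = !(dirb t u w) := by
  rcases lt_or_gt_of_ne h with h' | h'
  · have h2 : ¬ (w < u) := not_lt_of_gt h'
    simp [dirb, h', h2]
  · have h2 : ¬ (u < w) := not_lt_of_gt h'
    simp [dirb, h', h2]

def tourn (t : Fin m → Fin m → Bool) : OrientedGraph (Fin m) where
  adj u w := u ≠ w ∧ dirb t u w = true
  irrefl' v := by simp
  asymm' u w := by
    rintro ⟨h, h2⟩ ⟨h3, h4⟩
    rw [dirb_swap t h, h2] at h4
    simp at h4

lemma tourn_adj (t : Fin m → Fin m → Bool) {u w : Fin m} (h : u ≠ w) :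
    (tourn t).adj u w ↔ dirb t u w = true := by
  simp [tourn, h]

lemma tourn_adj' (t : Fin m → Fin m → Bool) {u w : Fin m} (h : u ≠ w) :
    (tourn t).adj w u ↔ dirb t u w = false := by
  rw [tourn_adj t h.symm, dirb_swap t h]
  simp

def Good (t : Fin m → Fin m → Bool) (s : Finset (Fin m)) (b : Fin m → Bool) (w : Fin m) : Prop :=
  (∀ u ∈ s, dirb t u w = b u) ∨ (∀ u ∈ s, dirb t u w = !(b u))

def PropT (Δ : ℕ) (t : Fin m → Fin m → Bool) : Prop :=
  ∀ (s : Finset (Fin m)) (b : Fin m → Bool), s.card ≤ Δ →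
    (Δ - s.card) * (Δ - 1) + 1 ≤ ((univ \ s).filter (Good t s b)).card

/-! ### Counting: existence of a good tournament -/

section Counting

noncomputable def Bfin (s : Finset (Fin m)) : Finset (Fin m → Bool) :=
  univ.filter (fun b => ∀ u, u ∉ s → b u = true)

noncomputable def BadSet (s : Finset (Fin m)) (b : Fin m → Bool) (F : Finset (Fin m)) :
    Finset (Fin m → Fin m → Bool) :=
  univ.filter (fun t => ∀ w ∈ F, ¬ Good t s b w)

lemma card_Bfin (s : Finset (Fin m)) : (Bfin s).card ≤ 2 ^ s.card := by
  have h2 : (2 : ℕ) ^ s.card = Fintype.card ({u // u ∈ s} → Bool) := by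
    rw [Fintype.card_fun, Fintype.card_bool, Fintype.card_coe]
  rw [h2, ← Finset.card_univ]
  apply Finset.card_le_card_of_injOn (fun b => fun u => b u.1)
  · intro b _; exact mem_univ _
  · intro b1 hb1 b2 hb2 heq
    simp only [coe_filter, Set.mem_setOf_eq, Bfin, mem_filter] at hb1 hb2
    funext u
    by_cases hu : u ∈ s
    · exact congrFun heq ⟨u, hu⟩
    · rw [hb1.2 u hu, hb2.2 u hu]

lemma card_badset (s : Finset (Fin m)) (b : Fin m → Bool) (F : Finset (Fin m))
    (hFs : F ⊆ univ \ s) (hs : s.Nonempty) :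
    (BadSet s b F).card ≤ (2 ^ s.card - 2) ^ F.card * 2 ^ (m * m - s.card * F.card) := by
  classical
  have hFnots : ∀ w ∈ F, w ∉ s := fun w hw => (Finset.mem_sdiff.1 (hFs hw)).2
  set φ : Fin m → Fin m → Fin m × Fin m := fun w u => if u < w then (u, w) else (w, u) with hφ
  set blocks : Finset (Fin m × Fin m) := F.biUnion (fun w => s.image (φ w)) with hblocks
  -- components of φ
  have hφ_elim : ∀ w u, (φ w u).1 = u ∧ (φ w u).2 = w ∨ (φ w u).1 = w ∧ (φ w u).2 = u := by
    intro w u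
    by_cases h : u < w
    · left; simp [hφ, h]
    · right; simp [hφ, h]
  have hφmem : ∀ w u, ((φ w u).1 = u ∨ (φ w u).1 = w) ∧ ((φ w u).2 = u ∨ (φ w u).2 = w) := by
    intro w u
    rcases hφ_elim w u with ⟨h1, h2⟩ | ⟨h1, h2⟩
    · exact ⟨Or.inl h1, Or.inr h2⟩
    · exact ⟨Or.inr h1, Or.inl h2⟩
  have hφinj : ∀ w, w ∉ s → ∀ u ∈ s, ∀ u' ∈ s, φ w u = φ w u' → u = u' := by
    intro w hw u hu u' hu' h
    have h1 : u ≠ w := fun hh => hw (hh ▸ hu)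
    have h2 : u' ≠ w := fun hh => hw (hh ▸ hu')
    by_cases hl : u < w <;> by_cases hl' : u' < w
    · rw [hφ] at h; simp only [if_pos hl, if_pos hl', Prod.mk.injEq] at h; exact h.1
    · rw [hφ] at h; simp only [if_pos hl, if_neg hl', Prod.mk.injEq] at h
      exact absurd h.1 h1
    · rw [hφ] at h; simp only [if_neg hl, if_pos hl', Prod.mk.injEq] at h
      exact absurd h.1.symm h2
    · rw [hφ] at h; simp only [if_neg hl, if_neg hl', Prod.mk.injEq] at h; exact h.2
  have hblk_card : blocks.card = s.card * F.card := by
    rw [hblocks, Finset.card_biUnion]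
    · have : ∀ w ∈ F, (s.image (φ w)).card = s.card := by
        intro w hw
        exact Finset.card_image_of_injOn (fun u hu u' hu' => hφinj w (hFnots w hw) u hu u' hu')
      rw [Finset.sum_congr rfl this, Finset.sum_const, smul_eq_mul, mul_comm]
    · intro w hw w' hw' hne
      rw [Function.onFun, Finset.disjoint_left]
      rintro p hp hp'
      rw [Finset.mem_image] at hp hp'
      obtain ⟨u, hu, hequ⟩ := hp
      obtain ⟨u', hu', hequ'⟩ := hp'
      -- p has w as a component and w' as a component, and the other component in s
      rcases hφ_elim w u with ⟨e1, e2⟩ | ⟨e1, e2⟩ <;>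
        rcases hφ_elim w' u' with ⟨e1', e2'⟩ | ⟨e1', e2'⟩
      · -- p.2 = w, p.2 = w'
        exact hne (by rw [hequ] at e2; rw [hequ'] at e2'; rw [← e2, ← e2'])
      · -- p.2 = w, p.2 = u' ∈ s : w = u' ∈ s, contradiction
        rw [hequ] at e2; rw [hequ'] at e2'
        exact absurd ((e2.symm.trans e2') ▸ hu' : w ∈ s) (hFnots w hw)
      · rw [hequ] at e2; rw [hequ'] at e2'
        exact absurd ((e2'.symm.trans e2) ▸ hu : w' ∈ s) (hFnots w' hw')
      · exact hne (by rw [hequ] at e1; rw [hequ'] at e1'; rw [← e1, ← e1'])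
  -- the two forbidden patterns
  set B1 : {u // u ∈ s} → Bool := fun u => b u.1 with hB1
  set B2 : {u // u ∈ s} → Bool := fun u => !(b u.1) with hB2
  have hB12 : B1 ≠ B2 := by
    obtain ⟨u0, hu0⟩ := hs
    intro h
    have := congrFun h ⟨u0, hu0⟩
    rw [hB1, hB2] at this
    simp at this
  -- the target finset
  set target : Finset (({w // w ∈ F} → ({u // u ∈ s} → Bool)) ×
      ({q : Fin m × Fin m // q ∉ blocks} → Bool)) :=
    (Fintype.piFinset (fun _ => (univ : Finset ({u // u ∈ s} → Bool)) \ {B1, B2})) ×ˢ univ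
    with htarget
  have hcard_target : target.card = (2 ^ s.card - 2) ^ F.card * 2 ^ (m * m - s.card * F.card) := by
    rw [htarget, Finset.card_product, Fintype.card_piFinset]
    congr 1
    · have hcard1 : ((univ : Finset ({u // u ∈ s} → Bool)) \ {B1, B2}).card = 2 ^ s.card - 2 := by
        rw [Finset.card_sdiff_of_subset (by intro x _; exact mem_univ x), Finset.card_univ,
          Fintype.card_fun, Fintype.card_bool, Fintype.card_coe, Finset.card_pair hB12]
      rw [Finset.prod_congr rfl (fun w _ => hcard1), Finset.prod_const, Finset.card_univ,
        Fintype.card_coe]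
    · rw [Finset.card_univ, Fintype.card_fun, Fintype.card_bool]
      congr 1
      have : Fintype.card {q : Fin m × Fin m // q ∉ blocks} =
          Fintype.card (Fin m × Fin m) - Fintype.card {q : Fin m × Fin m // q ∈ blocks} :=
        Fintype.card_subtype_compl _
      rw [this, Fintype.card_coe, hblk_card, Fintype.card_prod, Fintype.card_fin]
  rw [← hcard_target]
  apply Finset.card_le_card_of_injOn
    (fun t => (fun w => fun u => dirb t u.1 w.1, fun q => t q.1.1 q.1.2))
  · -- maps into target
    intro t ht
    rw [BadSet, Finset.mem_coe, Finset.mem_filter] at ht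
    rw [Finset.mem_coe, htarget, Finset.mem_product]
    constructor
    · rw [Fintype.mem_piFinset]
      intro w
      rw [Finset.mem_sdiff]
      refine ⟨mem_univ _, ?_⟩
      have hbad := ht.2 w.1 w.2
      rw [Good] at hbad
      push_neg at hbad
      rw [Finset.mem_insert, Finset.mem_singleton]
      rintro (h | h)
      · obtain ⟨u, hu, hball⟩ := hbad.1
        exact hball (congrFun h ⟨u, hu⟩)
      · obtain ⟨u, hu, hball⟩ := hbad.2
        exact hball (congrFun h ⟨u, hu⟩)
    · exact mem_univ _
  · -- injectivity
    intro t1 ht1 t2 ht2 heq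
    have h1 := congrArg Prod.fst heq
    have h2 := congrArg Prod.snd heq
    simp only at h1 h2
    funext a a'
    by_cases hmem : (a, a') ∈ blocks
    · rw [hblocks, Finset.mem_biUnion] at hmem
      obtain ⟨w, hwF, hmem⟩ := hmem
      rw [Finset.mem_image] at hmem
      obtain ⟨u, hus, hequ⟩ := hmem
      have hd : dirb t1 u w = dirb t2 u w := by
        have := congrFun (congrFun h1 ⟨w, hwF⟩) ⟨u, hus⟩
        exact this
      by_cases hl : u < w
      · rw [hφ] at hequ; simp only [if_pos hl, Prod.mk.injEq] at hequ
        rw [dirb, if_pos hl, dirb, if_pos hl] at hd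
        rw [← hequ.1, ← hequ.2]
        exact hd
      · rw [hφ] at hequ; simp only [if_neg hl, Prod.mk.injEq] at hequ
        rw [dirb, if_neg hl, dirb, if_neg hl] at hd
        rw [← hequ.1, ← hequ.2]
        exact Bool.not_inj hd
    · exact congrFun h2 ⟨(a, a'), hmem⟩

end Counting

/-! ### Existence of a good tournament -/

lemma two_pow_ge (Δ : ℕ) : Δ ≤ 2 ^ (Δ - 1) * 1 := by
  rcases Nat.eq_zero_or_pos Δ with h | h
  · omega
  · have := Nat.lt_two_pow_self (n := Δ - 1)
    omega

lemma m_large (Δ : ℕ) (hΔ : 29 ≤ Δ) : Δ * (Δ - 1) + 1 ≤ (Δ-3)*(Δ-1)*2^(Δ-1) := by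
  have h2 : 2 ^ (Δ - 1) ≥ Δ := by have := two_pow_ge Δ; omega
  have h3 : (Δ-3)*(Δ-1)*2^(Δ-1) ≥ (Δ-3)*(Δ-1)*Δ := Nat.mul_le_mul_left _ h2
  have h4 : (Δ-3)*(Δ-1)*Δ ≥ Δ*(Δ-1)+1 := by
    obtain ⟨a, rfl⟩ := Nat.exists_eq_add_of_le hΔ
    have e1 : 29 + a - 3 = 26 + a := by omega
    have e2 : 29 + a - 1 = 28 + a := by omega
    rw [e1, e2]
    have h5 : 2*((28+a)*(29+a)) ≤ (26+a)*(28+a)*(29+a) := by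
      have h6 : 2 ≤ 26 + a := by omega
      calc 2*((28+a)*(29+a)) ≤ (26+a)*((28+a)*(29+a)) := Nat.mul_le_mul_right _ h6
        _ = (26+a)*(28+a)*(29+a) := by ring
    nlinarith
  omega

lemma numeric_main (Δ : ℕ) (hΔ : 29 ≤ Δ) :
    ∑ j ∈ Icc 1 Δ, (((Δ-3)*(Δ-1)*2^(Δ-1)).choose j * 2 ^ j *
      ((Δ-3)*(Δ-1)*2^(Δ-1) - j).choose ((Δ-3)*(Δ-1)*2^(Δ-1) - j - (Δ-j)*(Δ-1)) *
      (2 ^ j - 2) ^ ((Δ-3)*(Δ-1)*2^(Δ-1) - j - (Δ-j)*(Δ-1)) *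
      2 ^ ((Δ-3)*(Δ-1)*2^(Δ-1) * ((Δ-3)*(Δ-1)*2^(Δ-1)) -
        j * ((Δ-3)*(Δ-1)*2^(Δ-1) - j - (Δ-j)*(Δ-1)))) <
    2 ^ ((Δ-3)*(Δ-1)*2^(Δ-1) * ((Δ-3)*(Δ-1)*2^(Δ-1))) :=
  Cases.numeric_main Δ hΔ

theorem exists_tourn (Δ : ℕ) (hΔ : 29 ≤ Δ) :
    ∃ t : Fin ((Δ-3)*(Δ-1)*2^(Δ-1)) → Fin ((Δ-3)*(Δ-1)*2^(Δ-1)) → Bool, PropT Δ t := by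
  classical
  by_contra hcon
  push_neg at hcon
  set M := (Δ-3)*(Δ-1)*2^(Δ-1) with hM
  set E : ℕ → ℕ := fun j => M - j - (Δ-j)*(Δ-1) with hE
  have hm1 : Δ * (Δ - 1) + 1 ≤ M := m_large Δ hΔ
  set BIG := (Icc 1 Δ).biUnion (fun j =>
    (Finset.powersetCard j (univ : Finset (Fin M))).biUnion (fun s =>
      (Bfin s).biUnion (fun b =>
        (Finset.powersetCard (E j) ((univ : Finset (Fin M)) \ s)).biUnion (fun F =>
          BadSet s b F)))) with hBIG
  have hsub : (univ : Finset (Fin M → Fin M → Bool)) ⊆ BIG := by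
    intro t _
    have hPt := hcon t
    rw [PropT] at hPt
    push_neg at hPt
    obtain ⟨s, b, hsΔ, hlt⟩ := hPt
    have hs1 : 1 ≤ s.card := by
      by_contra hs0
      have hs0' : s = ∅ := by
        rw [← Finset.card_eq_zero]; omega
      subst hs0'
      have hgall : ∀ w ∈ (univ : Finset (Fin M)) \ ∅, Good t ∅ b w := by
        intro w _
        exact Or.inl (fun u hu => absurd hu (Finset.notMem_empty u))
      rw [Finset.filter_true_of_mem hgall, Finset.sdiff_empty, Finset.card_univ,
        Fintype.card_fin, Finset.card_empty, Nat.sub_zero] at hlt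
      omega
    set b' : Fin M → Bool := fun u => if u ∈ s then b u else true with hb'
    have hb'mem : b' ∈ Bfin s := by
      rw [Bfin, Finset.mem_filter]
      exact ⟨mem_univ _, fun u hu => by rw [hb']; simp [hu]⟩
    have hgood_eq : (univ \ s).filter (Good t s b) = (univ \ s).filter (Good t s b') := by
      apply Finset.filter_congr
      intro w _
      unfold Good
      have hbb : ∀ u ∈ s, b u = b' u := by
        intro u hu; rw [hb']; simp [hu]
      constructor
      · rintro (h | h)
        · exact Or.inl (fun u hu => by rw [← hbb u hu]; exact h u hu)
        · exact Or.inr (fun u hu => by rw [← hbb u hu]; exact h u hu)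
      · rintro (h | h)
        · exact Or.inl (fun u hu => by rw [hbb u hu]; exact h u hu)
        · exact Or.inr (fun u hu => by rw [hbb u hu]; exact h u hu)
    set badw := (univ \ s) \ ((univ \ s).filter (Good t s b')) with hbadw
    have hcard_univ_s : (univ \ s).card = M - s.card := by
      rw [Finset.card_sdiff_of_subset (Finset.subset_univ s), Finset.card_univ, Fintype.card_fin]
    have hbadw_card : E s.card ≤ badw.card := by
      rw [hbadw, Finset.card_sdiff_of_subset (Finset.filter_subset _ _), hcard_univ_s]
      rw [hgood_eq] at hlt
      have h1 : ((univ \ s).filter (Good t s b')).card ≤ (Δ - s.card) * (Δ - 1) := by omega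
      simp only [hE]
      omega
    obtain ⟨F, hFsub, hFcard⟩ := Finset.exists_subset_card_eq hbadw_card
    rw [hBIG, Finset.mem_biUnion]
    refine ⟨s.card, Finset.mem_Icc.2 ⟨hs1, hsΔ⟩, ?_⟩
    rw [Finset.mem_biUnion]
    refine ⟨s, Finset.mem_powersetCard.2 ⟨Finset.subset_univ s, rfl⟩, ?_⟩
    rw [Finset.mem_biUnion]
    refine ⟨b', hb'mem, ?_⟩
    rw [Finset.mem_biUnion]
    refine ⟨F, Finset.mem_powersetCard.2
      ⟨hFsub.trans (Finset.sdiff_subset), hFcard⟩, ?_⟩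
    rw [BadSet, Finset.mem_filter]
    refine ⟨mem_univ _, ?_⟩
    intro w hwF hgw
    have hwbad := hFsub hwF
    rw [hbadw, Finset.mem_sdiff] at hwbad
    exact hwbad.2 (Finset.mem_filter.2 ⟨hwbad.1, hgw⟩)
  have hcard := Finset.card_le_card hsub
  have hΩ : (univ : Finset (Fin M → Fin M → Bool)).card = 2 ^ (M * M) := by
    rw [Finset.card_univ, Fintype.card_fun, Fintype.card_fun, Fintype.card_bool,
      Fintype.card_fin, ← pow_mul]
  rw [hΩ] at hcard
  have hbound : BIG.card ≤ ∑ j ∈ Icc 1 Δ, (M.choose j * 2 ^ j *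
      (M - j).choose (E j) * (2 ^ j - 2) ^ (E j) * 2 ^ (M * M - j * E j)) := by
    rw [hBIG]
    refine le_trans Finset.card_biUnion_le (Finset.sum_le_sum ?_)
    intro j hj
    rw [Finset.mem_Icc] at hj
    refine le_trans Finset.card_biUnion_le ?_
    have hstep : ∀ s ∈ Finset.powersetCard j (univ : Finset (Fin M)),
        ((Bfin s).biUnion (fun b =>
          (Finset.powersetCard (E j) ((univ : Finset (Fin M)) \ s)).biUnion
            (fun F => BadSet s b F))).card ≤
        2 ^ j * ((M - j).choose (E j) * ((2 ^ j - 2) ^ (E j) * 2 ^ (M * M - j * E j))) := by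
      intro s hs
      obtain ⟨hssub, hscard⟩ := Finset.mem_powersetCard.1 hs
      refine le_trans Finset.card_biUnion_le ?_
      have hstep2 : ∀ b ∈ Bfin s,
          ((Finset.powersetCard (E j) ((univ : Finset (Fin M)) \ s)).biUnion
            (fun F => BadSet s b F)).card ≤
          (M - j).choose (E j) * ((2 ^ j - 2) ^ (E j) * 2 ^ (M * M - j * E j)) := by
        intro b _
        refine le_trans Finset.card_biUnion_le ?_
        have hstep3 : ∀ F ∈ Finset.powersetCard (E j) ((univ : Finset (Fin M)) \ s),
            (BadSet s b F).card ≤ (2 ^ j - 2) ^ (E j) * 2 ^ (M * M - j * E j) := by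
          intro F hF
          obtain ⟨hFsub, hFcard⟩ := Finset.mem_powersetCard.1 hF
          have := card_badset s b F hFsub (Finset.card_pos.1 (by omega))
          rw [hscard, hFcard] at this
          exact this
        refine le_trans (Finset.sum_le_sum hstep3) ?_
        rw [Finset.sum_const, smul_eq_mul, Finset.card_powersetCard]
        apply Nat.mul_le_mul_right
        have : ((univ : Finset (Fin M)) \ s).card = M - j := by
          rw [Finset.card_sdiff_of_subset (Finset.subset_univ s), Finset.card_univ,
            Fintype.card_fin, hscard]
        rw [this]
      refine le_trans (Finset.sum_le_sum hstep2) ?_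
      rw [Finset.sum_const, smul_eq_mul]
      exact Nat.mul_le_mul_right _ (by rw [← hscard]; exact card_Bfin s)
    refine le_trans (Finset.sum_le_sum hstep) ?_
    rw [Finset.sum_const, smul_eq_mul, Finset.card_powersetCard, Finset.card_univ,
      Fintype.card_fin]
    ring_nf
    apply le_of_eq
    ring
  have := numeric_main Δ hΔ
  rw [← hM] at this
  have : (2:ℕ) ^ (M * M) < 2 ^ (M * M) := by
    calc (2:ℕ) ^ (M * M) ≤ BIG.card := hcard
      _ ≤ _ := hbound
      _ < 2 ^ (M * M) := by
          refine lt_of_le_of_lt (le_of_eq ?_) this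
          rfl
  omega

/-! ### Greedy coloring -/

variable {V : Type} [Fintype V]

def Inv (t : Fin m → Fin m → Bool) (G' : OrientedGraph V) (C : Finset V)
    (f : V → Fin m) (σ : V → Bool) : Prop :=
  (∀ u ∈ C, ∀ w ∈ C, G'.adj u w → f u ≠ f w ∧ dirb t (f u) (f w) = (σ u == σ w))
  ∧ (∀ x, x ∉ C → ∀ w ∈ C, ∀ w' ∈ C, G'.toSimpleGraph.Adj x w → G'.toSimpleGraph.Adj x w' →
      w ≠ w' → f w ≠ f w')

lemma adj_toSimpleGraph (G' : OrientedGraph V) {u w : V} :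
    G'.toSimpleGraph.Adj u w ↔ G'.adj u w ∨ G'.adj w u := Iff.rfl

theorem greedy (t : Fin m → Fin m → Bool) (G' : OrientedGraph V) (Δ : ℕ) (hm : 0 < m)
    (hdeg : ∀ v, (G'.toSimpleGraph.neighborFinset v).card ≤ Δ)
    (hP : PropT Δ t) (C : Finset V) :
    ∃ f σ, Inv t G' C f σ := by
  induction C using Finset.strongInduction with
  | _ C IH =>
  rcases C.eq_empty_or_nonempty with rfl | ⟨v, hv⟩
  · refine ⟨fun _ => ⟨0, hm⟩, fun _ => true, ?_, ?_⟩
    · intro u hu; simp at hu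
    · intro x hx w hw; simp at hw
  · set C' := C.erase v with hC'def
    obtain ⟨f, σ, hInv⟩ := IH C' (Finset.erase_ssubset hv)
    have hvC' : v ∉ C' := Finset.notMem_erase v C
    set N := G'.toSimpleGraph.neighborFinset v with hNdef
    set J := C' ∩ N with hJdef
    have hJmem : ∀ w ∈ J, w ∈ C' ∧ G'.toSimpleGraph.Adj v w := by
      intro w hw
      rw [hJdef, Finset.mem_inter] at hw
      exact ⟨hw.1, (SimpleGraph.mem_neighborFinset _ _ _).1 hw.2⟩
    have hinj : ∀ w ∈ J, ∀ w' ∈ J, f w = f w' → w = w' := by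
      intro w hw w' hw' hff
      by_contra hne
      exact hInv.2 v hvC' w (hJmem w hw).1 w' (hJmem w' hw').1
        (hJmem w hw).2 (hJmem w' hw').2 hne hff
    set s := J.image f with hsdef
    have hs_card : s.card = J.card := Finset.card_image_of_injOn (fun a ha b hb => hinj a ha b hb)
    have hJΔ : J.card ≤ Δ := le_trans (Finset.card_le_card (Finset.inter_subset_right)) (hdeg v)
    have hsΔ : s.card ≤ Δ := hs_card ▸ hJΔ
    set b : Fin m → Bool := fun col =>
      if h : ∃ w, w ∈ J ∧ f w = col then
        (if G'.adj h.choose v then σ h.choose else !(σ h.choose)) else true with hbdef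
    have hb : ∀ w ∈ J, b (f w) = (if G'.adj w v then σ w else !(σ w)) := by
      intro w hw
      have hex : ∃ w', w' ∈ J ∧ f w' = f w := ⟨w, hw, rfl⟩
      have hspec := hex.choose_spec
      have heq : hex.choose = w := hinj _ hspec.1 _ hw hspec.2
      rw [hbdef]
      simp only [dif_pos hex]
      rw [heq]
    -- the good set
    have hgood := hP s b hsΔ
    -- the bad set
    set bad : Finset (Fin m) :=
      (N \ C).biUnion (fun x => (C' ∩ G'.toSimpleGraph.neighborFinset x).image f) with hbaddef
    have hbadcard : bad.card ≤ (Δ - s.card) * (Δ - 1) := by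
      have h1 : (N \ C).card ≤ Δ - s.card := by
        have hdisj : Disjoint (N \ C) J := by
          rw [Finset.disjoint_left]
          intro a ha haJ
          have : a ∈ C' := (hJmem a haJ).1
          exact (Finset.mem_sdiff.1 ha).2 (Finset.mem_of_mem_erase this)
        have hsub : (N \ C) ∪ J ⊆ N := by
          apply Finset.union_subset (Finset.sdiff_subset)
          rw [hJdef]; exact Finset.inter_subset_right
        have := le_trans (Finset.card_le_card hsub) (hdeg v)
        rw [Finset.card_union_of_disjoint hdisj] at this
        omega
      calc bad.card ≤ ∑ x ∈ N \ C, ((C' ∩ G'.toSimpleGraph.neighborFinset x).image f).card :=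
            Finset.card_biUnion_le
        _ ≤ ∑ _x ∈ N \ C, (Δ - 1) := by
            apply Finset.sum_le_sum
            intro x hx
            have hxN : x ∈ N := (Finset.mem_sdiff.1 hx).1
            have hvNx : v ∈ G'.toSimpleGraph.neighborFinset x := by
              rw [SimpleGraph.mem_neighborFinset]
              exact ((SimpleGraph.mem_neighborFinset _ _ _).1 hxN).symm
            have hsub : C' ∩ G'.toSimpleGraph.neighborFinset x ⊆
                (G'.toSimpleGraph.neighborFinset x).erase v := by
              intro a ha
              rw [Finset.mem_erase]
              rcases Finset.mem_inter.1 ha with ⟨h1, h2⟩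
              exact ⟨fun hav => hvC' (hav ▸ h1), h2⟩
            calc ((C' ∩ G'.toSimpleGraph.neighborFinset x).image f).card
                ≤ (C' ∩ G'.toSimpleGraph.neighborFinset x).card := Finset.card_image_le
              _ ≤ ((G'.toSimpleGraph.neighborFinset x).erase v).card := Finset.card_le_card hsub
              _ = (G'.toSimpleGraph.neighborFinset x).card - 1 :=
                  Finset.card_erase_of_mem hvNx
              _ ≤ Δ - 1 := by have := hdeg x; omega
        _ = (N \ C).card * (Δ - 1) := by rw [Finset.sum_const, smul_eq_mul]
        _ ≤ (Δ - s.card) * (Δ - 1) := Nat.mul_le_mul_right _ h1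
    -- choose a good color outside bad
    have hex_c : ∃ c, c ∈ ((univ \ s).filter (Good t s b)) ∧ c ∉ bad := by
      have h2 : bad.card < ((univ \ s).filter (Good t s b)).card := by omega
      have h3 : ¬ ((univ \ s).filter (Good t s b)) ⊆ bad := by
        intro hsub
        exact absurd (Finset.card_le_card hsub) (by omega)
      rcases Finset.not_subset.1 h3 with ⟨c, hc1, hc2⟩
      exact ⟨c, hc1, hc2⟩
    obtain ⟨c, hcmem, hcbad⟩ := hex_c
    rw [Finset.mem_filter] at hcmem
    have hcs : c ∉ s := (Finset.mem_sdiff.1 hcmem.1).2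
    have hcgood : Good t s b c := hcmem.2
    set τ : Bool := if (∀ u ∈ s, dirb t u c = b u) then true else false with hτdef
    have hreq : ∀ w ∈ J, dirb t (f w) c =
        (if G'.adj w v then (σ w == τ) else !(σ w == τ)) := by
      intro w hw
      have hfws : f w ∈ s := Finset.mem_image_of_mem f hw
      by_cases hd : (∀ u ∈ s, dirb t u c = b u)
      · have hτ : τ = true := by rw [hτdef, if_pos hd]
        rw [hτ]
        have := hd (f w) hfws
        rw [hb w hw] at this
        by_cases haw : G'.adj w v
        · rw [if_pos haw] at this ⊢; rw [this]; cases σ w <;> simp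
        · rw [if_neg haw] at this ⊢; rw [this]; cases σ w <;> simp
      · have hτ : τ = false := by rw [hτdef, if_neg hd]
        have hd2 : ∀ u ∈ s, dirb t u c = !(b u) := hcgood.resolve_left hd
        rw [hτ]
        have := hd2 (f w) hfws
        rw [hb w hw] at this
        by_cases haw : G'.adj w v
        · rw [if_pos haw] at this ⊢; rw [this]; cases σ w <;> simp
        · rw [if_neg haw] at this ⊢; rw [this]; cases σ w <;> simp
    have hcnefw : ∀ w ∈ J, f w ≠ c := by
      intro w hw hcontra
      exact hcs (hcontra ▸ Finset.mem_image_of_mem f hw)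
    refine ⟨Function.update f v c, Function.update σ v τ, ?_, ?_⟩
    · -- part (a)
      intro u hu w hw hadj
      by_cases hu' : u = v <;> by_cases hw' : w = v
      · rw [hu', hw'] at hadj; exact absurd hadj (G'.irrefl' v)
      · rw [hu'] at hadj ⊢
        have hwC' : w ∈ C' := Finset.mem_erase.2 ⟨hw', hw⟩
        have hwJ : w ∈ J := by
          rw [hJdef, Finset.mem_inter]
          refine ⟨hwC', ?_⟩
          rw [hNdef, SimpleGraph.mem_neighborFinset]
          exact Or.inl hadj
        rw [Function.update_self, Function.update_of_ne hw']
        rw [Function.update_self, Function.update_of_ne hw']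
        refine ⟨fun h => (hcnefw w hwJ) h.symm, ?_⟩
        rw [dirb_swap t (hcnefw w hwJ)]
        rw [hreq w hwJ, if_neg (G'.asymm' v w hadj)]
        cases σ w <;> cases τ <;> simp
      · rw [hw'] at hadj ⊢
        have huC' : u ∈ C' := Finset.mem_erase.2 ⟨hu', hu⟩
        have huJ : u ∈ J := by
          rw [hJdef, Finset.mem_inter]
          refine ⟨huC', ?_⟩
          rw [hNdef, SimpleGraph.mem_neighborFinset]
          exact Or.inr hadj
        rw [Function.update_of_ne hu', Function.update_self]
        rw [Function.update_of_ne hu', Function.update_self]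
        refine ⟨hcnefw u huJ, ?_⟩
        rw [hreq u huJ, if_pos hadj]
      · have huC' : u ∈ C' := Finset.mem_erase.2 ⟨hu', hu⟩
        have hwC' : w ∈ C' := Finset.mem_erase.2 ⟨hw', hw⟩
        rw [Function.update_of_ne hu', Function.update_of_ne hw']
        rw [Function.update_of_ne hu', Function.update_of_ne hw']
        exact hInv.1 u huC' w hwC' hadj
    · -- part (b)
      intro x hx w hw w' hw' hxw hxw' hne
      have hxC' : x ∉ C' := fun h => hx (Finset.mem_of_mem_erase h)
      have key : G'.toSimpleGraph.Adj x v → ∀ a ∈ C', G'.toSimpleGraph.Adj x a → f a ≠ c := by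
        intro hxv a ha hxa hfac
        apply hcbad
        rw [hbaddef, Finset.mem_biUnion]
        refine ⟨x, ?_, ?_⟩
        · rw [Finset.mem_sdiff]
          refine ⟨?_, hx⟩
          rw [hNdef, SimpleGraph.mem_neighborFinset]
          exact hxv.symm
        · rw [Finset.mem_image]
          refine ⟨a, ?_, hfac⟩
          rw [Finset.mem_inter]
          exact ⟨ha, (SimpleGraph.mem_neighborFinset _ _ _).2 hxa⟩
      by_cases hw2 : w = v <;> by_cases hw3 : w' = v
      · exact absurd (hw2.trans hw3.symm) hne
      · rw [hw2] at hxw ⊢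
        have hw'C' : w' ∈ C' := Finset.mem_erase.2 ⟨hw3, hw'⟩
        rw [Function.update_self, Function.update_of_ne hw3]
        exact (key hxw w' hw'C' hxw').symm
      · rw [hw3] at hxw' ⊢
        have hwC' : w ∈ C' := Finset.mem_erase.2 ⟨hw2, hw⟩
        rw [Function.update_of_ne hw2, Function.update_self]
        exact key hxw' w hwC' hxw
      · have hwC' : w ∈ C' := Finset.mem_erase.2 ⟨hw2, hw⟩
        have hw'C' : w' ∈ C' := Finset.mem_erase.2 ⟨hw3, hw'⟩
        rw [Function.update_of_ne hw2, Function.update_of_ne hw3]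
        exact hInv.2 x hxC' w hwC' w' hw'C' hxw hxw' hne


theorem pushable_hom_of_inv (t : Fin m → Fin m → Bool) (G' : OrientedGraph V)
    (f : V → Fin m) (σ : V → Bool) (h : Inv t G' univ f σ) :
    IsPushableHom G' (tourn t) f := by
  refine ⟨{x | σ x = true}, ?_⟩
  intro u w hadj
  rcases hadj with ⟨hiff, ha⟩ | ⟨hiff, ha⟩
  · have hσ : σ u = σ w := by
      by_cases h1 : σ u = true
      · simp only [Set.mem_setOf_eq] at hiff; rw [h1, (hiff.1 h1).symm]
      · have h2 : σ u = false := by simpa using h1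
        have h3 : σ w = false := by
          by_cases hh : σ w = true
          · exact absurd (hiff.2 hh) (by simp [h2])
          · simpa using hh
        rw [h2, h3]
    obtain ⟨hne, hd⟩ := h.1 u (mem_univ u) w (mem_univ w) ha
    exact ⟨hne, by rw [hd]; simp [hσ]⟩
  · have hσ : σ u ≠ σ w := by
      intro hc
      apply hiff
      simp only [Set.mem_setOf_eq, hc]
    obtain ⟨hne, hd⟩ := h.1 w (mem_univ w) u (mem_univ u) ha
    refine ⟨hne.symm, ?_⟩
    rw [dirb_swap t hne.symm] at hd
    have : (σ w == σ u) = false := by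
      cases hw : σ w <;> cases hu : σ u <;> simp_all
    rw [this] at hd
    simpa using hd

/-! ### Doubling and padding -/

def double (H : OrientedGraph W) : OrientedGraph (W × Bool) where
  adj a b := (a.2 = b.2 ∧ H.adj a.1 b.1) ∨ (a.2 ≠ b.2 ∧ H.adj b.1 a.1)
  irrefl' v := by
    rintro (⟨_, h⟩ | ⟨h, _⟩)
    · exact H.irrefl' _ h
    · exact h rfl
  asymm' a b := by
    rintro (⟨h1, h2⟩ | ⟨h1, h2⟩) (⟨h3, h4⟩ | ⟨h3, h4⟩)
    · exact H.asymm' _ _ h2 h4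
    · exact h3 h1.symm
    · exact h1 h3.symm
    · exact H.asymm' _ _ h2 h4

theorem double_hom {H : OrientedGraph W} {G' : OrientedGraph V} {g : V → W}
    (h : IsPushableHom G' H g) :
    ∃ f : V → W × Bool, IsHom G' (double H) f := by
  obtain ⟨S, hS⟩ := h
  refine ⟨fun v => (g v, if v ∈ S then true else false), ?_⟩
  intro u w hadj
  by_cases hiff : (u ∈ S ↔ w ∈ S)
  · have h1 := hS u w (Or.inl ⟨hiff, hadj⟩)
    have h2 : (if u ∈ S then true else false) = (if w ∈ S then true else false) := by
      by_cases hu : u ∈ S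
      · simp [hu, hiff.1 hu]
      · have hw : w ∉ S := fun hw => hu (hiff.2 hw)
        simp [hu, hw]
    exact Or.inl ⟨h2, h1⟩
  · have h1 := hS w u (Or.inr ⟨fun hh => hiff hh.symm, hadj⟩)
    have h2 : (if u ∈ S then true else false) ≠ (if w ∈ S then true else false) := by
      by_cases hu : u ∈ S <;> by_cases hw : w ∈ S <;> simp_all
    exact Or.inr ⟨h2, h1⟩

theorem pad {W : Type} [Fintype W] (G' : OrientedGraph V) (H : OrientedGraph W) (f : V → W)
    (hom : IsHom G' H f) (n : ℕ) (h : Fintype.card W ≤ n) :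
    ∃ (H' : OrientedGraph (Fin n)) (f' : V → Fin n), IsHom G' H' f' := by
  have : Nonempty (W ↪ Fin n) := by
    rw [← Fintype.card_fin n] at h
    exact Function.Embedding.nonempty_of_card_le h
  obtain ⟨e⟩ := this
  refine ⟨⟨fun x y => ∃ a b : W, H.adj a b ∧ e a = x ∧ e b = y, ?_, ?_⟩, e ∘ f, ?_⟩
  · rintro v ⟨a, b, hab, ha, hb⟩
    rw [← hb] at ha
    exact H.irrefl' b (e.injective ha ▸ hab)
  · rintro x y ⟨a, b, hab, ha, hb⟩ ⟨a', b', hab', ha', hb'⟩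
    have e1 : a = b' := e.injective (by rw [ha, hb'])
    have e2 : b = a' := e.injective (by rw [hb, ha'])
    exact H.asymm' a b hab (e1 ▸ e2 ▸ hab')
  · intro u v huv
    exact ⟨f u, f v, hom u v huv, rfl, rfl⟩

end OCN

/-- For every `Δ ≥ 29`, every orientation of every connected finite simple graph with
maximum degree at most `Δ` has oriented chromatic number at most
`(Δ-3)(Δ-1)·2^Δ + 2`. -/
theorem orientedChromatic_upper_of_maxDegree
    (Δ : ℕ) (hΔ : 29 ≤ Δ) (V : Type) [Fintype V] (G : SimpleGraph V)
    (hconn : G.Connected) (hdeg : ∀ v, (G.neighborSet v).ncard ≤ Δ)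
    (G' : OrientedGraph V) (horient : G'.toSimpleGraph = G) :
    G'.orientedChromatic ≤ (Δ - 3) * (Δ - 1) * 2 ^ Δ + 2 := by
  classical
  set m := (Δ-3)*(Δ-1)*2^(Δ-1) with hm_def
  obtain ⟨t, hP⟩ := OCN.exists_tourn Δ hΔ
  have hm : 0 < m := by
    have h1 : 0 < Δ - 3 := by omega
    have h2 : 0 < Δ - 1 := by omega
    positivity
  have hdeg' : ∀ v, (G'.toSimpleGraph.neighborFinset v).card ≤ Δ := by
    intro v
    rw [horient, SimpleGraph.neighborFinset_def, ← Set.ncard_eq_toFinset_card']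
    exact hdeg v
  obtain ⟨f, σ, hInv⟩ := OCN.greedy t G' Δ hm hdeg' hP Finset.univ
  have hpush := OCN.pushable_hom_of_inv t G' f σ hInv
  obtain ⟨f₂, hf₂⟩ := OCN.double_hom hpush
  have hcard : Fintype.card (Fin m × Bool) ≤ (Δ - 3) * (Δ - 1) * 2 ^ Δ + 2 := by
    simp only [Fintype.card_prod, Fintype.card_fin, Fintype.card_bool]
    have : m * 2 = (Δ - 3) * (Δ - 1) * 2 ^ Δ := by
      rw [hm_def]
      have : 2 ^ Δ = 2 ^ (Δ - 1) * 2 := by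
        rw [← pow_succ]
        congr 1
        omega
      rw [this]
      ring
    omega
  obtain ⟨H', f', hf'⟩ := OCN.pad G' _ f₂ hf₂ ((Δ - 3) * (Δ - 1) * 2 ^ Δ + 2) hcard
  exact Nat.sInf_le ⟨H', f', hf'⟩
end

section
/- For every integer Δ ≥ 29, there exist a connected finite simple graph G with maximum degree at most Δ and an orientation G→ of G whose oriented chromatic number satisfies χ_o(G→) ≥ 2^(Δ/2) (as a real-number inequality). -/
namespace OCAux

variable {n m r : ℕ}

abbrev EE (n m r : ℕ) := (ZMod n × Bool × Fin m) ⊕ (ZMod n × Fin r)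

def src : EE n m r → ZMod n × Bool
  | .inl (u, s, _) => (u, s)
  | .inr (u, _) => (u, false)

def dst : EE n m r → ZMod n × Bool
  | .inl (u, s, i) => (u + (((i : ℕ) + 1 : ℕ) : ZMod n), s)
  | .inr (u, j) => (u + (((j : ℕ) : ℕ) : ZMod n), true)

lemma cast_ne_zero (hn : 2 * m + 2 < n) {a : ℕ} (h0 : 0 < a) (h1 : a < n) :
    (a : ZMod n) ≠ 0 := by
  haveI : NeZero n := ⟨by omega⟩
  intro h
  rw [ZMod.natCast_eq_zero_iff] at h
  exact absurd (Nat.le_of_dvd h0 h) (by omega)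

lemma cast_inj (hn : 2 * m + 2 < n) {a b : ℕ} (ha : a < n) (hb : b < n)
    (h : (a : ZMod n) = b) : a = b := by
  haveI : NeZero n := ⟨by omega⟩
  rw [← ZMod.val_cast_of_lt ha, ← ZMod.val_cast_of_lt hb, h]

lemma src_ne_dst (hn : 2 * m + 2 < n) (e : EE n m r) : src e ≠ dst e := by
  match e with
  | .inl (u, s, i) =>
    have hi := i.isLt
    intro h
    have hu : u = u + (((i : ℕ) + 1 : ℕ) : ZMod n) := congrArg Prod.fst h
    exact cast_ne_zero hn (Nat.succ_pos _) (by omega) (left_eq_add.mp hu)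
  | .inr (u, j) =>
    intro h
    exact absurd (congrArg Prod.snd h) (by simp [src, dst])

lemma ends_inj (hn : 2 * m + 2 < n) (hr : r ≤ 2) {e e' : EE n m r}
    (h1 : src e = src e') (h2 : dst e = dst e') : e = e' := by
  match e, e' with
  | .inl (u, s, i), .inl (u', s', i') =>
    have hi := i.isLt; have hi' := i'.isLt
    simp only [src, dst, Prod.mk.injEq] at h1 h2
    obtain ⟨hu, hs⟩ := h1
    subst hu; subst hs
    have h3 : (((i : ℕ) + 1 : ℕ) : ZMod n) = (((i' : ℕ) + 1 : ℕ) : ZMod n) :=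
      add_left_cancel h2.1
    have h4 := cast_inj hn (by omega) (by omega) h3
    simp only [Sum.inl.injEq, Prod.mk.injEq, Fin.ext_iff]
    exact ⟨trivial, trivial, by omega⟩
  | .inr (u, j), .inr (u', j') =>
    have hj := j.isLt; have hj' := j'.isLt
    simp only [src, dst, Prod.mk.injEq] at h1 h2
    obtain ⟨hu, -⟩ := h1
    subst hu
    have h3 := add_left_cancel h2.1
    have h4 := cast_inj hn (by omega) (by omega) h3
    simp only [Sum.inr.injEq, Prod.mk.injEq, Fin.ext_iff]
    exact ⟨trivial, by omega⟩
  | .inl (u, s, i), .inr (u', j') =>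
    simp only [src, dst, Prod.mk.injEq] at h1 h2
    rw [h1.2] at h2; exact absurd h2.2 (by simp)
  | .inr (u, j), .inl (u', s', i') =>
    simp only [src, dst, Prod.mk.injEq] at h1 h2
    rw [← h1.2] at h2; exact absurd h2.2 (by simp)

lemma no_swap (hn : 2 * m + 2 < n) {e e' : EE n m r}
    (h1 : src e = dst e') (h2 : dst e = src e') : False := by
  match e, e' with
  | .inl (u, s, i), .inl (u', s', i') =>
    have hi := i.isLt; have hi' := i'.isLt
    simp only [src, dst, Prod.mk.injEq] at h1 h2
    have h3 : u = u + ((((i : ℕ) + 1) + ((i' : ℕ) + 1) : ℕ) : ZMod n) := by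
      push_cast
      rw [← add_assoc]
      nth_rewrite 1 [h1.1]
      rw [← h2.1]
      push_cast
      ring
    exact cast_ne_zero hn (by omega) (by omega) (left_eq_add.mp h3)
  | .inl (u, s, i), .inr (u', j') =>
    simp only [src, dst, Prod.mk.injEq] at h1 h2
    rw [h1.2] at h2; exact absurd h2.2 (by simp)
  | .inr (u, j), .inl (u', s', i') =>
    simp only [src, dst, Prod.mk.injEq] at h1 h2
    rw [← h1.2] at h2; exact absurd h2.2 (by simp)
  | .inr (u, j), .inr (u', j') =>
    simp only [src, dst, Prod.mk.injEq] at h1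
    exact absurd h1.2 (by simp)


def Gr (n m r : ℕ) (hn : 2 * m + 2 < n) : SimpleGraph (ZMod n × Bool) where
  Adj x y := ∃ e : EE n m r, (x = src e ∧ y = dst e) ∨ (x = dst e ∧ y = src e)
  symm := by refine ⟨?_⟩ <;> rintro x y ⟨e, (⟨hx, hy⟩ | ⟨hx, hy⟩)⟩
             exacts [⟨e, Or.inr ⟨hy, hx⟩⟩, ⟨e, Or.inl ⟨hy, hx⟩⟩]
  loopless := by
    refine ⟨?_⟩
    rintro x ⟨e, (⟨hx, hy⟩ | ⟨hx, hy⟩)⟩ <;>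
      exact src_ne_dst hn e (hx ▸ hy ▸ rfl)

def Ori (n m r : ℕ) (hn : 2 * m + 2 < n) (hr : r ≤ 2) (b : EE n m r → Bool) :
    OrientedGraph (ZMod n × Bool) where
  adj x y := ∃ e : EE n m r,
    (b e = true ∧ x = src e ∧ y = dst e) ∨ (b e = false ∧ x = dst e ∧ y = src e)
  irrefl' := by
    rintro x ⟨e, (⟨-, hx, hy⟩ | ⟨-, hx, hy⟩)⟩ <;>
      exact src_ne_dst hn e (hx ▸ hy ▸ rfl)
  asymm' := by
    rintro x y ⟨e, (⟨hb, hx, hy⟩ | ⟨hb, hx, hy⟩)⟩ ⟨e', (⟨hb', hx', hy'⟩ | ⟨hb', hx', hy'⟩)⟩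
    · exact no_swap hn (hx.symm.trans hy') (hy.symm.trans hx')
    · have := ends_inj hn hr (hx.symm.trans hy') (hy.symm.trans hx')
      subst this; rw [hb] at hb'; exact Bool.noConfusion hb'
    · have := ends_inj hn hr (hx'.symm.trans hy) (hy'.symm.trans hx)
      subst this; rw [hb] at hb'; exact Bool.noConfusion hb'
    · exact no_swap hn (hy'.symm.trans hx) (hx'.symm.trans hy)

lemma toSimpleGraph_eq (hn : 2 * m + 2 < n) (hr : r ≤ 2) (b : EE n m r → Bool) :
    (Ori n m r hn hr b).toSimpleGraph = Gr n m r hn := by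
  ext x y
  show (Ori n m r hn hr b).adj x y ∨ (Ori n m r hn hr b).adj y x ↔ _
  constructor
  · rintro (⟨e, (⟨-, hx, hy⟩ | ⟨-, hx, hy⟩)⟩ | ⟨e, (⟨-, hx, hy⟩ | ⟨-, hx, hy⟩)⟩)
    exacts [⟨e, Or.inl ⟨hx, hy⟩⟩, ⟨e, Or.inr ⟨hx, hy⟩⟩,
            ⟨e, Or.inr ⟨hy, hx⟩⟩, ⟨e, Or.inl ⟨hy, hx⟩⟩]
  · rintro ⟨e, (⟨hx, hy⟩ | ⟨hx, hy⟩)⟩ <;> cases hb : b e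
    · exact Or.inr ⟨e, Or.inr ⟨hb, hy, hx⟩⟩
    · exact Or.inl ⟨e, Or.inl ⟨hb, hx, hy⟩⟩
    · exact Or.inl ⟨e, Or.inr ⟨hb, hx, hy⟩⟩
    · exact Or.inr ⟨e, Or.inl ⟨hb, hy, hx⟩⟩

lemma recov (hn : 2 * m + 2 < n) (hr : r ≤ 2) {b : EE n m r → Bool} {c : ℕ}
    {H : OrientedGraph (Fin c)} {f : ZMod n × Bool → Fin c}
    (hf : ∀ u v, (Ori n m r hn hr b).adj u v → H.adj (f u) (f v)) (e : EE n m r) :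
    b e = true ↔ H.adj (f (src e)) (f (dst e)) := by
  constructor
  · intro hb
    exact hf _ _ ⟨e, Or.inl ⟨hb, rfl, rfl⟩⟩
  · intro hH
    cases hb : b e
    · have h2 : (Ori n m r hn hr b).adj (dst e) (src e) := ⟨e, Or.inr ⟨hb, rfl, rfl⟩⟩
      exact absurd hH (H.asymm' _ _ (hf _ _ h2))
    · rfl

lemma deg_le (hn : 2 * m + 2 < n) (x : ZMod n × Bool) :
    ((Gr n m r hn).neighborSet x).ncard ≤ 2 * m + r := by
  obtain ⟨u, s⟩ := x
  classical
  let g : Fin m ⊕ Fin m ⊕ Fin r → ZMod n × Bool := fun t =>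
    match t with
    | .inl i => (u + (((i : ℕ) + 1 : ℕ) : ZMod n), s)
    | .inr (.inl i) => (u - (((i : ℕ) + 1 : ℕ) : ZMod n), s)
    | .inr (.inr j) => cond s (u - (((j : ℕ) : ℕ) : ZMod n), false)
                              (u + (((j : ℕ) : ℕ) : ZMod n), true)
  have hsub : (Gr n m r hn).neighborSet (u, s) ⊆ Set.range g := by
    rintro y ⟨e, (⟨hx, hy⟩ | ⟨hx, hy⟩)⟩
    · match e with
      | .inl (u', s', i) =>
        obtain ⟨hu, hs⟩ : u = u' ∧ s = s' := Prod.mk.injEq .. ▸ hx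
        refine ⟨.inl i, ?_⟩
        simp only [g, dst] at hy ⊢
        rw [hy, hu, hs]
      | .inr (u', j) =>
        obtain ⟨hu, hs⟩ : u = u' ∧ s = false := Prod.mk.injEq .. ▸ hx
        refine ⟨.inr (.inr j), ?_⟩
        simp only [g, dst, hs, cond_false] at hy ⊢
        rw [hy, hu]
    · match e with
      | .inl (u', s', i) =>
        obtain ⟨hu, hs⟩ : u = u' + (((i : ℕ) + 1 : ℕ) : ZMod n) ∧ s = s' :=
          Prod.mk.injEq .. ▸ hx
        refine ⟨.inr (.inl i), ?_⟩
        simp only [g, src] at hy ⊢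
        rw [hy, hs, eq_sub_of_add_eq hu.symm]
      | .inr (u', j) =>
        obtain ⟨hu, hs⟩ : u = u' + (((j : ℕ) : ℕ) : ZMod n) ∧ s = true :=
          Prod.mk.injEq .. ▸ hx
        refine ⟨.inr (.inr j), ?_⟩
        simp only [g, src, hs, cond_true] at hy ⊢
        rw [hy, eq_sub_of_add_eq hu.symm]
  calc ((Gr n m r hn).neighborSet (u, s)).ncard
      ≤ (Set.range g).ncard := Set.ncard_le_ncard hsub (Set.finite_range g)
    _ ≤ Fintype.card (Fin m ⊕ Fin m ⊕ Fin r) := by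
        rw [← Set.image_univ]
        refine le_trans (Set.ncard_image_le Set.finite_univ) ?_
        rw [Set.ncard_univ, Nat.card_eq_fintype_card]
    _ = 2 * m + r := by simp; omega

lemma connected (hn : 2 * m + 2 < n) (hm : 0 < m) (hr0 : 0 < r) :
    (Gr n m r hn).Connected := by
  haveI : NeZero n := ⟨by omega⟩
  rw [SimpleGraph.connected_iff]
  refine ⟨?_, ⟨((0 : ZMod n), false)⟩⟩
  have adj1 : ∀ u : ZMod n, (Gr n m r hn).Adj (u, false) (u, true) := by
    intro u
    refine ⟨.inr (u, ⟨0, hr0⟩), Or.inl ⟨rfl, ?_⟩⟩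
    simp [dst]
  have adj2 : ∀ (u : ZMod n) (s : Bool), (Gr n m r hn).Adj (u, s) (u + 1, s) := by
    intro u s
    refine ⟨.inl (u, s, ⟨0, hm⟩), Or.inl ⟨rfl, ?_⟩⟩
    simp [dst]
  have reach : ∀ k : ℕ, (Gr n m r hn).Reachable ((0 : ZMod n), false) ((k : ZMod n), false) := by
    intro k
    induction k with
    | zero => simpa using SimpleGraph.Reachable.refl _
    | succ k ih =>
      have : ((k + 1 : ℕ) : ZMod n) = (k : ZMod n) + 1 := by push_cast; ring
      rw [this]
      exact ih.trans (adj2 _ _).reachable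
  have reachAll : ∀ x : ZMod n × Bool, (Gr n m r hn).Reachable ((0 : ZMod n), false) x := by
    rintro ⟨v, s⟩
    have h1 := reach v.val
    rw [ZMod.natCast_rightInverse v] at h1
    cases s
    · exact h1
    · exact h1.trans (adj1 v).reachable
  intro x y
  exact (reachAll x).symm.trans (reachAll y)


lemma bern (K : ℕ) (hK : 2 ≤ K) : 2 * (K - 1) ^ (K - 1) ≤ K ^ (K - 1) := by
  have hK2 : (2:ℝ) ≤ (K:ℝ) := by exact_mod_cast hK
  have hpos : (0:ℝ) < (K:ℝ) - 1 := by linarith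
  have h := one_add_mul_le_pow (a := 1/((K:ℝ)-1))
    (le_trans (by norm_num) (by positivity : (0:ℝ) ≤ 1/((K:ℝ)-1))) (K-1)
  have hcast : ((K-1:ℕ):ℝ) = (K:ℝ)-1 := by
    rw [Nat.cast_sub (by omega)]; norm_num
  rw [hcast] at h
  have hmul : ((K:ℝ)-1) * (1/((K:ℝ)-1)) = 1 := by field_simp
  rw [hmul] at h
  have h2 : (2:ℝ) * ((K:ℝ)-1)^(K-1) ≤ (K:ℝ)^(K-1) := by
    calc (2:ℝ) * ((K:ℝ)-1)^(K-1)
        ≤ (1 + 1/((K:ℝ)-1))^(K-1) * ((K:ℝ)-1)^(K-1) := by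
          apply mul_le_mul_of_nonneg_right _ (le_of_lt (pow_pos hpos _))
          linarith
      _ = ((1 + 1/((K:ℝ)-1)) * ((K:ℝ)-1))^(K-1) := (mul_pow _ _ _).symm
      _ = (K:ℝ)^(K-1) := by congr 1; field_simp; ring
  have h3 : ((2 * (K-1)^(K-1) : ℕ) : ℝ) ≤ ((K^(K-1) : ℕ) : ℝ) := by
    push_cast [hcast]
    convert h2 using 2 <;> rw [← hcast] <;> norm_num
  exact_mod_cast h3

lemma exists_hom_fin {V : Type} [Fintype V] (G' : OrientedGraph V) :
    ∃ (H : OrientedGraph (Fin (Fintype.card V))) (f : V → Fin (Fintype.card V)),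
      OrientedGraph.IsHom G' H f := by
  classical
  let e := Fintype.equivFin V
  refine ⟨⟨fun a b => G'.adj (e.symm a) (e.symm b), fun v h => G'.irrefl' _ h,
    fun a b h h' => G'.asymm' _ _ h h'⟩, e, fun u v h => ?_⟩
  show G'.adj (e.symm (e u)) (e.symm (e v))
  simpa using h

lemma pad {V : Type} (G' : OrientedGraph V) {a b : ℕ} (hab : a ≤ b)
    (H : OrientedGraph (Fin a)) (f : V → Fin a) (hf : OrientedGraph.IsHom G' H f) :
    ∃ (H' : OrientedGraph (Fin b)) (f' : V → Fin b), OrientedGraph.IsHom G' H' f' := by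
  refine ⟨⟨fun x y => ∃ (hx : (x:ℕ) < a) (hy : (y:ℕ) < a), H.adj ⟨x.val, hx⟩ ⟨y.val, hy⟩,
    ?_, ?_⟩, fun v => Fin.castLE hab (f v), ?_⟩
  · rintro v ⟨hx, hy, h⟩; exact H.irrefl' _ h
  · rintro x y ⟨hx, hy, h⟩ ⟨hx', hy', h'⟩; exact H.asymm' _ _ h h'
  · intro u v h
    exact ⟨(f u).isLt, (f v).isLt, hf u v h⟩

end OCAux

open OCAux

/-- For every `Δ ≥ 29`, there is a connected finite simple graph with maximum degree
at most `Δ` and an orientation of it with oriented chromatic number at least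
`2^(Δ/2)`. -/
theorem orientedChromatic_lower_of_maxDegree
    (Δ : ℕ) (hΔ : 29 ≤ Δ) :
    ∃ (V : Type) (_ : Fintype V) (G : SimpleGraph V) (G' : OrientedGraph V),
      G.Connected ∧ (∀ v, (G.neighborSet v).ncard ≤ Δ) ∧ G'.toSimpleGraph = G ∧
      (2 : ℝ) ^ ((Δ : ℝ) / 2) ≤ (G'.orientedChromatic : ℝ) := by
  classical
  obtain ⟨R, M, hR2, hR0, hΔeq, hM⟩ : ∃ R M, R ≤ 2 ∧ 0 < R ∧ 2*M + R = Δ ∧ 13 ≤ M :=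
    ⟨2 - Δ % 2, (Δ - (2 - Δ % 2))/2, by omega, by omega, by omega, by omega⟩
  set K := 2 ^ Δ with hK
  have hKΔ : Δ < K := Nat.lt_two_pow_self
  have hK4 : 4 ≤ K := by
    calc (4:ℕ) = 2^2 := rfl
      _ ≤ 2^Δ := Nat.pow_le_pow_right (by norm_num) (by omega)
  set N := (K - 1) * K with hN
  have h3K : 3 * K ≤ N := Nat.mul_le_mul_right K (by omega)
  have hn : 2 * M + 2 < N := by omega
  haveI : NeZero N := ⟨by omega⟩
  set c := ⌈(2:ℝ) ^ ((Δ:ℝ)/2)⌉₊ - 1 with hc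
  have hpow_pos : (0:ℝ) < (2:ℝ) ^ ((Δ:ℝ)/2) := Real.rpow_pos_of_pos (by norm_num) _
  have hceil_pos : 0 < ⌈(2:ℝ) ^ ((Δ:ℝ)/2)⌉₊ := Nat.ceil_pos.mpr hpow_pos
  have hclt : (c:ℝ) < (2:ℝ) ^ ((Δ:ℝ)/2) := Nat.lt_ceil.mp (by omega)
  have hcK : c * c ≤ K - 1 := by
    have h2 : ((2:ℝ) ^ ((Δ:ℝ)/2)) ^ (2:ℕ) = (K:ℝ) := by
      rw [← Real.rpow_natCast ((2:ℝ) ^ ((Δ:ℝ)/2)) 2, ← Real.rpow_mul (by norm_num : (0:ℝ) ≤ 2)]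
      have hxy : (Δ:ℝ)/2 * ((2:ℕ):ℝ) = ((Δ:ℕ):ℝ) := by push_cast; ring
      rw [hxy, Real.rpow_natCast, hK]
      push_cast
      ring
    have h1 : (c:ℝ)^(2:ℕ) < (K:ℝ) := by
      rw [← h2]; exact pow_lt_pow_left₀ hclt (Nat.cast_nonneg c) (by norm_num)
    have h0 : c^2 < K := by exact_mod_cast h1
    have : c*c < K := by rw [← pow_two]; exact h0
    omega
  have key : ∃ b : EE N M R → Bool,
      ¬ ∃ (H : OrientedGraph (Fin c)) (f : ZMod N × Bool → Fin c),
        OrientedGraph.IsHom (Ori N M R hn hR2 b) H f := by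
    by_contra hcon
    push_neg at hcon
    choose Hb fb hb using hcon
    have hinj : Function.Injective
        (fun b : EE N M R → Bool =>
          ((fun p q => decide ((Hb b).adj p q), fb b) :
            (Fin c → Fin c → Bool) × ((ZMod N × Bool) → Fin c))) := by
      intro b1 b2 hEq
      have hHb : (fun p q => decide ((Hb b1).adj p q)) = (fun p q => decide ((Hb b2).adj p q)) :=
        congrArg Prod.fst hEq
      have hfb : fb b1 = fb b2 := congrArg Prod.snd hEq
      funext e
      have r1 := recov hn hR2 (hb b1) e
      have r2 := recov hn hR2 (hb b2) e
      have hd : decide ((Hb b1).adj (fb b1 (src e)) (fb b1 (dst e)))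
              = decide ((Hb b2).adj (fb b2 (src e)) (fb b2 (dst e))) := by
        rw [hfb]; exact congrFun (congrFun hHb _) _
      cases hb1 : b1 e <;> cases hb2 : b2 e
      · rfl
      · exfalso
        have hH2 := r2.mp hb2
        have hdt : decide ((Hb b1).adj (fb b1 (src e)) (fb b1 (dst e))) = true := by
          rw [hd]; exact decide_eq_true hH2
        have := r1.mpr (of_decide_eq_true hdt)
        rw [hb1] at this; exact Bool.noConfusion this
      · exfalso
        have hH1 := r1.mp hb1
        have hdt : decide ((Hb b2).adj (fb b2 (src e)) (fb b2 (dst e))) = true := by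
          rw [← hd]; exact decide_eq_true hH1
        have := r2.mpr (of_decide_eq_true hdt)
        rw [hb2] at this; exact Bool.noConfusion this
      · rfl
    have hcard := Fintype.card_le_of_injective _ hinj
    have hE : Fintype.card (EE N M R) = Δ * N := by
      simp only [EE, Fintype.card_sum, Fintype.card_prod, ZMod.card, Fintype.card_bool,
        Fintype.card_fin]
      rw [← hΔeq]; ring
    have hL : Fintype.card (EE N M R → Bool) = K ^ N := by
      rw [Fintype.card_fun, Fintype.card_bool, hE, hK, ← pow_mul]
    have hRt : Fintype.card ((Fin c → Fin c → Bool) × ((ZMod N × Bool) → Fin c))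
        = 2^(c*c) * c^(2*N) := by
      simp only [Fintype.card_prod, Fintype.card_fun, Fintype.card_bool, Fintype.card_fin,
        ZMod.card]
      rw [← pow_mul]
      ring
    have hineq : K ^ N ≤ 2^(K-1) * (K-1)^N := by
      calc K ^ N = Fintype.card (EE N M R → Bool) := hL.symm
        _ ≤ _ := hcard
        _ = 2^(c*c) * c^(2*N) := hRt
        _ ≤ 2^(K-1) * (K-1)^N := by
            apply Nat.mul_le_mul
            · exact Nat.pow_le_pow_right (by norm_num) hcK
            · calc c^(2*N) = (c^2)^N := pow_mul c 2 N
                _ = (c*c)^N := by rw [pow_two]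
                _ ≤ (K-1)^N := Nat.pow_le_pow_left hcK N
    have hbern := bern K (by omega)
    have hKN : 2^K * (K-1)^N ≤ K^N := by
      calc 2^K * (K-1)^N = (2*(K-1)^(K-1))^K := by
            rw [mul_pow, ← pow_mul, hN]
        _ ≤ (K^(K-1))^K := Nat.pow_le_pow_left hbern K
        _ = K^N := by rw [← pow_mul, hN]
    have h1 : 2^K * (K-1)^N ≤ 2^(K-1) * (K-1)^N := le_trans hKN hineq
    have h2 : 2^K ≤ 2^(K-1) :=
      Nat.le_of_mul_le_mul_right
        (by rwa [Nat.mul_comm ((2:ℕ)^K) _, Nat.mul_comm ((2:ℕ)^(K-1)) _] at h1)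
        (pow_pos (by omega) N)
    have := (Nat.pow_le_pow_iff_right (by norm_num : 1 < 2)).mp h2
    omega
  obtain ⟨b0, hb0⟩ := key
  refine ⟨ZMod N × Bool, inferInstance, Gr N M R hn, Ori N M R hn hR2 b0,
    connected hn (by omega) hR0, ?_, toSimpleGraph_eq hn hR2 b0, ?_⟩
  · intro v; exact hΔeq ▸ deg_le hn v
  · have hSne : {k | ∃ (H : OrientedGraph (Fin k)) (f : ZMod N × Bool → Fin k),
        OrientedGraph.IsHom (Ori N M R hn hR2 b0) H f}.Nonempty := by
      obtain ⟨H, f, hf⟩ := exists_hom_fin (Ori N M R hn hR2 b0)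
      exact ⟨_, H, f, hf⟩
    have hoc : OrientedGraph.orientedChromatic (Ori N M R hn hR2 b0)
        = sInf {k | ∃ (H : OrientedGraph (Fin k)) (f : ZMod N × Bool → Fin k),
            OrientedGraph.IsHom (Ori N M R hn hR2 b0) H f} := rfl
    have hge : c + 1 ≤ OrientedGraph.orientedChromatic (Ori N M R hn hR2 b0) := by
      rw [hoc]
      by_contra hlt
      push_neg at hlt
      obtain ⟨H, f, hf⟩ := Nat.sInf_mem hSne
      obtain ⟨H', f', hf'⟩ := pad _ (by omega : sInf _ ≤ c) H f hf
      exact hb0 ⟨H', f', hf'⟩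
    calc (2:ℝ) ^ ((Δ:ℝ)/2) ≤ (⌈(2:ℝ) ^ ((Δ:ℝ)/2)⌉₊ : ℝ) := Nat.le_ceil _
      _ = ((c + 1 : ℕ) : ℝ) := by congr 1; omega
      _ ≤ _ := by exact_mod_cast hge
end

section
/- For every integer t ≥ 29, there exists a tournament on exactly (t−3)·(t−1)·2^(t−1) vertices that has Property P(t−1, t−1). -/
section KeyEquiv
variable {α ι : Type*} [Fintype α] [Fintype ι] [DecidableEq α] [DecidableEq ι]

open Classical in
/-- Decompose a boolean function on `α` into its (twisted) values along an injection `c : ι → α`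
and the rest. -/
noncomputable def keyEquiv (c : ι → α) (hc : Function.Injective c) (σ : ι → Bool → Bool)
    (hσ : ∀ i, Function.Involutive (σ i)) :
    (α → Bool) ≃ (ι → Bool) × ({x : α // x ∉ Set.range c} → Bool) where
  toFun f := (fun i => σ i (f (c i)), fun x => f x.1)
  invFun gh x := if h : ∃ i, c i = x then σ h.choose (gh.1 h.choose)
    else gh.2 ⟨x, fun hx => h hx⟩
  left_inv f := by
    funext x
    by_cases h : ∃ i, c i = x
    · simp only [dif_pos h]
      rw [h.choose_spec, hσ]
    · simp only [dif_neg h]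
  right_inv := by
    rintro ⟨g, h2⟩
    refine Prod.ext ?_ ?_
    · funext i
      have h : ∃ i', c i' = c i := ⟨i, rfl⟩
      simp only [dif_pos h]
      have : h.choose = i := hc h.choose_spec
      rw [this, hσ]
    · funext x
      have hx : ¬ ∃ i, c i = ↑x := fun ⟨i, hi⟩ => x.2 ⟨i, hi⟩
      simp only [dif_neg hx]

lemma card_twisted (c : ι → α) (hc : Function.Injective c) (σ : ι → Bool → Bool)
    (hσ : ∀ i, Function.Involutive (σ i)) (P : (ι → Bool) → Prop) [DecidablePred P] (nA nI : ℕ)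
    (hA : Fintype.card α = nA) (hI : Fintype.card ι = nI) :
    Fintype.card {f : α → Bool // P (fun i => σ i (f (c i)))}
      = Fintype.card {g : ι → Bool // P g} * 2 ^ (nA - nI) := by
  classical
  subst hA hI
  let e := keyEquiv c hc σ hσ
  have e1 : {f : α → Bool // P (fun i => σ i (f (c i)))} ≃
      {x : (ι → Bool) × ({x : α // x ∉ Set.range c} → Bool) // P x.1} :=
    (Equiv.subtypeEquiv e (fun f => Iff.rfl))
  have e2 : {x : (ι → Bool) × ({x : α // x ∉ Set.range c} → Bool) // P x.1} ≃
      {g : ι → Bool // P g} × ({x : α // x ∉ Set.range c} → Bool) :=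
    Equiv.prodSubtypeFstEquivSubtypeProd
  rw [Fintype.card_congr (e1.trans e2), Fintype.card_prod, Fintype.card_fun]
  rw [Fintype.card_bool]
  congr 2
  rw [Fintype.card_subtype_compl]
  congr 1
  exact (Fintype.card_congr (Equiv.ofInjective c hc)).symm

end KeyEquiv
open Finset

section Pattern
variable {W B : Type*} [Fintype W] [DecidableEq W] [Fintype B] [DecidableEq B]

lemma card_fiber (Good : B → Prop) [DecidablePred Good] (S : Finset W) :
    Fintype.card {G : W → B // ∀ w, (Good (G w) ↔ w ∈ S)}
      = (Fintype.card {b // Good b}) ^ S.card *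
        (Fintype.card B - Fintype.card {b // Good b}) ^ (Fintype.card W - S.card) := by
  classical
  rw [Fintype.card_congr (Equiv.subtypePiEquivPi (p := fun w b => Good b ↔ w ∈ S)), Fintype.card_pi]
  have key : ∀ w : W, Fintype.card {b // Good b ↔ w ∈ S} =
      if w ∈ S then Fintype.card {b // Good b}
      else (Fintype.card B - Fintype.card {b // Good b}) := by
    intro w
    by_cases h : w ∈ S
    · simp only [if_pos h]
      exact Fintype.card_congr (Equiv.subtypeEquivRight (by simp [h]))
    · simp only [if_neg h]
      rw [← Fintype.card_subtype_compl]
      exact Fintype.card_congr (Equiv.subtypeEquivRight (by simp [h]))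
  rw [Finset.prod_congr rfl (fun w _ => key w), Finset.prod_ite, Finset.prod_const,
    Finset.prod_const]
  congr 2
  · rw [Finset.filter_mem_eq_inter, Finset.univ_inter]
  · rw [← Finset.card_univ, ← Finset.card_filter_add_card_filter_not
      (p := fun w => w ∈ S) (s := (univ : Finset W)), Finset.filter_mem_eq_inter,
      Finset.univ_inter, Nat.add_sub_cancel_left]

lemma card_small_good (Good : B → Prop) [DecidablePred Good] (k cg mm cB : ℕ)
    (hcg : Fintype.card {b // Good b} = cg) (hmm : Fintype.card W = mm)
    (hB : Fintype.card B = cB) :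
    Fintype.card {G : W → B // (univ.filter fun w => Good (G w)).card < k}
      ≤ ∑ i ∈ range k, mm.choose i * cg ^ i * (cB - cg) ^ (mm - i) := by
  classical
  subst hcg hmm hB
  set cg := Fintype.card {b // Good b}
  set cb := Fintype.card B - cg
  set m := Fintype.card W
  rw [Fintype.card_subtype]
  set T := univ.filter (fun G : W → B => (univ.filter fun w => Good (G w)).card < k) with hT
  set A := (range k).biUnion (fun i => powersetCard i (univ : Finset W)) with hA
  have hmem : ∀ G ∈ T, (univ.filter fun w => Good (G w)) ∈ A := by
    intro G hG
    rw [hT, mem_filter] at hG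
    rw [hA, mem_biUnion]
    exact ⟨_, mem_range.2 hG.2, mem_powersetCard.2 ⟨subset_univ _, rfl⟩⟩
  rw [Finset.card_eq_sum_card_fiberwise hmem]
  have hfib : ∀ S : Finset W,
      (T.filter (fun G => (univ.filter fun w => Good (G w)) = S)).card
        ≤ cg ^ S.card * cb ^ (m - S.card) := by
    intro S
    calc (T.filter (fun G => (univ.filter fun w => Good (G w)) = S)).card
        ≤ ((univ : Finset (W → B)).filter
            (fun G => (univ.filter fun w => Good (G w)) = S)).card := by
          apply Finset.card_le_card
          apply Finset.filter_subset_filter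
          exact Finset.filter_subset _ _
      _ = cg ^ S.card * cb ^ (m - S.card) := by
          rw [← Fintype.card_subtype, ← card_fiber Good S]
          apply Fintype.card_congr
          apply Equiv.subtypeEquivRight
          intro G
          constructor
          · intro h w; simp [← h]
          · intro h; ext w; simp [h w]
  calc ∑ S ∈ A, (T.filter (fun G => (univ.filter fun w => Good (G w)) = S)).card
      ≤ ∑ S ∈ A, cg ^ S.card * cb ^ (m - S.card) := Finset.sum_le_sum (fun S _ => hfib S)
    _ = ∑ i ∈ range k, ∑ S ∈ powersetCard i (univ : Finset W),
          cg ^ S.card * cb ^ (m - S.card) := by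
        rw [hA, Finset.sum_biUnion]
        intro i hi j hj hij
        apply Finset.disjoint_left.2
        intro S hSi hSj
        exact hij (((mem_powersetCard.1 hSi).2.symm.trans (mem_powersetCard.1 hSj).2))
    _ = ∑ i ∈ range k, m.choose i * (cg ^ i * cb ^ (m - i)) := by
        apply Finset.sum_congr rfl
        intro i _
        rw [Finset.sum_congr rfl (fun S hS => by
          rw [(mem_powersetCard.1 hS).2]), Finset.sum_const, Finset.card_powersetCard,
          Finset.card_univ, smul_eq_mul]
    _ = _ := by
        apply Finset.sum_congr rfl
        intro i _
        ring

end Pattern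
open Finset

lemma exists_L (t : ℕ) (ht : 29 ≤ t) : ∃ L, t ≤ 2 ^ L ∧ 4 * L + 8 ≤ t := by
  induction t with
  | zero => omega
  | succ s ih =>
    rcases Nat.lt_or_ge s 29 with hs | hs
    · -- s + 1 = 29
      have : s + 1 = 29 := by omega
      exact ⟨5, by omega, by omega⟩
    · obtain ⟨L, h1, h2⟩ := ih hs
      rcases Nat.lt_or_ge s (2 ^ L) with h | h
      · exact ⟨L, by omega, by omega⟩
      · refine ⟨L + 1, by omega, ?_⟩
        have hL5 : 5 ≤ L := by
          by_contra hc
          interval_cases L <;> omega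
        have : 4 * L + 11 ≤ 2 ^ L := by
          clear h1 h2 h ht hs
          induction L with
          | zero => omega
          | succ n ihn =>
            rcases Nat.lt_or_ge n 5 with h5 | h5
            · interval_cases n <;> simp_all <;> omega
            · have := ihn (by omega)
              have : 2 ^ n ≤ 2 ^ (n+1) := Nat.pow_le_pow_right (by norm_num) (by omega)
              omega
        omega

lemma bern (a b n : ℕ) : a ^ (n+1) + (n+1) * b * a ^ n ≤ (a + b) ^ (n+1) := by
  induction n with
  | zero => simp
  | succ n ih =>
    have key : (a + b) ^ (n+2) = (a+b)^(n+1) * (a+b) := by ring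
    calc a ^ (n+2) + (n+2) * b * a ^ (n+1)
        ≤ (a ^ (n+1) + (n+1) * b * a ^ n) * (a + b) := by ring_nf; nlinarith [Nat.zero_le (b*b*a^n)]
      _ ≤ (a+b)^(n+1) * (a+b) := Nat.mul_le_mul_right _ ih
      _ = (a + b) ^ (n+2) := by ring

lemma pow_step (r : ℕ) (hr : 1 ≤ r) : 2 * (2*r) ^ r ≤ (2*r + 2) ^ r := by
  obtain ⟨n, rfl⟩ := Nat.exists_eq_add_of_le hr
  have := bern (2 * (1 + n)) 2 n
  calc 2 * (2*(1+n)) ^ (1+n) = (2*(1+n))^(n+1) + (2*(1+n)) * (2*(1+n))^n := by ring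
    _ ≤ (2*(1+n))^(n+1) + (n+1) * 2 * (2*(1+n))^n := by
        apply Nat.add_le_add_left
        apply Nat.mul_le_mul_right
        omega
    _ ≤ (2*(1+n) + 2) ^ (n+1) := bern _ 2 n
    _ = (2*(1+n) + 2) ^ (1+n) := by ring

lemma pow_div (r s : ℕ) (hr : 1 ≤ r) : 2 ^ (s / r) * (2*r) ^ s ≤ (2*r + 2) ^ s := by
  conv_rhs => rw [← Nat.div_add_mod s r]
  rw [pow_add, pow_mul]
  calc 2 ^ (s/r) * (2*r) ^ s
      = (2 * (2*r)^r) ^ (s/r) * (2*r) ^ (s % r) := by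
        rw [show (2 * (2*r)^r) ^ (s/r) * (2*r) ^ (s % r)
            = 2 ^ (s/r) * (2*r) ^ s from by
          rw [mul_pow, ← pow_mul, mul_assoc, ← pow_add, Nat.div_add_mod]]
    _ ≤ ((2*r+2)^r) ^ (s/r) * (2*r+2) ^ (s % r) := by
        apply Nat.mul_le_mul
        · exact Nat.pow_le_pow_left (pow_step r hr) _
        · exact Nat.pow_le_pow_left (by omega) _

set_option maxHeartbeats 1000000 in
lemma main_ineq (t : ℕ) (ht : 29 ≤ t) :
    2 ^ (t-1) * ((t-3)*(t-1)*2^(t-1)) ^ (t-1) *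
      (∑ i ∈ Finset.range (t-1), ((t-3)*(t-1)*2^(t-1) - (t-1)).choose i * 2 ^ i *
        (2^(t-1) - 2) ^ ((t-3)*(t-1)*2^(t-1) - (t-1) - i))
      < 2 ^ ((t-1) * ((t-3)*(t-1)*2^(t-1) - (t-1))) := by
  set j := t - 1 with hj
  set N := (t-3)*(t-1)*2^(t-1) with hN
  set m := N - j with hm
  set q := 2^j - 2 with hq
  set s := m - (j-1) with hs
  set r := 2^(t-2) - 1 with hr
  obtain ⟨L, hL1, hL2⟩ := exists_L t ht
  have hP2 : (2:ℕ)^(t-2) * 2 = 2^(t-1) := by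
    rw [← pow_succ]; congr 1; omega
  have htP : t ≤ 2^(t-2) := by
    calc t ≤ 2^L := hL1
      _ ≤ 2^(t-2) := Nat.pow_le_pow_right (by norm_num) (by omega)
  have hA1 : t - 1 ≤ (t-3)*(t-1) := Nat.le_mul_of_pos_left _ (by omega)
  have hA2 : 2 ≤ (t-3)*(t-1) := le_trans (by omega) hA1
  have hNlow : 2^(t-1) + (t-1) ≤ N := by
    have h2 : 2 * 2^(t-1) ≤ N := by
      rw [hN]; exact Nat.mul_le_mul_right _ hA2
    have h3 : t - 1 ≤ 2^(t-1) := by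
      calc t - 1 ≤ 2^(t-2) := by omega
        _ ≤ 2^(t-1) := Nat.pow_le_pow_right (by norm_num) (by omega)
    omega
  have hmlow : 2^(t-1) ≤ m := by omega
  have hq2m : q ≤ 2*m := by
    have h1 : q ≤ 2^(t-1) := by rw [hq, hj]; omega
    omega
  have hkm : j - 1 ≤ m := by
    have h1 : j - 1 ≤ 2^(t-1) := by
      have := htP
      have h2 : 2^(t-2) ≤ 2^(t-1) := Nat.pow_le_pow_right (by norm_num) (by omega)
      omega
    omega
  have hq2 : 2 ≤ q := by
    have h1 : (2:ℕ)^5 ≤ 2^j := Nat.pow_le_pow_right (by norm_num) (by omega)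
    rw [hq]; norm_num at h1; omega
  obtain ⟨E1, hE1⟩ : ∃ x, x = 2*L + (t-1) := ⟨_, rfl⟩
  have hN2 : N ≤ 2^E1 := by
    calc N ≤ 2^L * 2^L * 2^(t-1) := by
          rw [hN]
          gcongr <;> omega
      _ = 2^E1 := by rw [← pow_add, ← pow_add]; congr 1; omega
  have h2m : 2*m ≤ 2^(E1+1) := by
    have h1 : m ≤ 2^E1 := by omega
    rw [pow_succ]; omega
  -- step 1&2 : bound the sum
  have step2 : (∑ i ∈ Finset.range j, m.choose i * 2 ^ i * q ^ (m - i))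
      ≤ j * ((2*m)^(j-1) * q^s) := by
    have step1 : ∀ i ∈ Finset.range j, m.choose i * 2 ^ i * q ^ (m - i)
        ≤ (2*m)^(j-1) * q^s := by
      intro i hi
      rw [Finset.mem_range] at hi
      have hik : i ≤ j - 1 := by omega
      calc m.choose i * 2 ^ i * q ^ (m - i)
          ≤ m^i * 2^i * q^(m-i) := by
            gcongr
            exact Nat.choose_le_pow m i
        _ = (2*m)^i * (q^(j-1-i) * q^s) := by
            have hexp : m - i = (j-1-i) + s := by omega
            rw [mul_comm (m^i) (2^i), ← mul_pow, hexp, pow_add]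
        _ ≤ (2*m)^i * ((2*m)^(j-1-i) * q^s) := by
            gcongr
        _ = (2*m)^(j-1) * q^s := by
            rw [← mul_assoc, ← pow_add]
            congr 2
            omega
    calc (∑ i ∈ Finset.range j, m.choose i * 2 ^ i * q ^ (m - i))
        ≤ ∑ _i ∈ Finset.range j, (2*m)^(j-1) * q^s := Finset.sum_le_sum step1
      _ = j * ((2*m)^(j-1) * q^s) := by rw [Finset.sum_const, Finset.card_range, smul_eq_mul]
  -- step 3 : everything ≤ 2^E * q^s
  obtain ⟨E, hE⟩ : ∃ x, x = j + E1*j + L + (E1+1)*(j-1) := ⟨_, rfl⟩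
  have step3 : 2^j * N^j * (j * ((2*m)^(j-1) * q^s)) ≤ 2^E * q^s := by
    calc 2^j * N^j * (j * ((2*m)^(j-1) * q^s))
        ≤ 2^j * (2^E1)^j * (2^L * ((2^(E1+1))^(j-1) * q^s)) := by
          have hjL : j ≤ 2^L := by omega
          exact Nat.mul_le_mul (Nat.mul_le_mul (le_refl _) (Nat.pow_le_pow_left hN2 _))
            (Nat.mul_le_mul hjL (Nat.mul_le_mul (Nat.pow_le_pow_left h2m _) (le_refl _)))
      _ = 2^E * q^s := by
          rw [hE, pow_add 2 (j + E1*j + L) ((E1+1)*(j-1)), pow_add 2 (j+E1*j) L,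
            pow_add 2 j (E1*j), pow_mul 2 E1 j, pow_mul 2 (E1+1) (j-1)]
          ring
  -- step 4 : exponent comparison
  have hr1 : 1 ≤ r := by
    have h1 : (2:ℕ)^2 ≤ 2^(t-2) := Nat.pow_le_pow_right (by norm_num) (by omega)
    rw [hr]; norm_num at h1; omega
  have hd : 2*((t-3)*(t-1)) - 1 ≤ s / r := by
    rw [Nat.le_div_iff_mul_le hr1]
    have hsN : s = N - (2*t - 3) := by omega
    have hNP : N = (2*((t-3)*(t-1))) * 2^(t-2) := by
      rw [hN, ← hP2]; ring
    set A := (t-3)*(t-1) with hA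
    have key : (2*A - 1) * r + (2*t - 3) ≤ N := by
      rw [hNP, hr]
      have e1 : 2*A = (2*A - 1) + 1 := by omega
      have e2 : (2:ℕ)^(t-2) = (2^(t-2) - 1) + 1 := by
        have h1 : 1 ≤ (2:ℕ)^(t-2) := Nat.one_le_two_pow
        omega
      set a := 2*A - 1 with ha
      set p' := (2:ℕ)^(t-2) - 1 with hp'
      rw [e1, e2]
      have haz : 2*t - 3 ≤ a := by omega
      nlinarith
    omega
  have stepE : E + 1 ≤ j*(j-1) + (2*((t-3)*(t-1)) - 1) := by
    have hj' : j = (t-3) + 2 := by omega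
    have hj1 : j - 1 = (t-3) + 1 := by omega
    have ht1 : t - 1 = (t-3) + 2 := by omega
    set cc := t - 3 with hcc
    have hcc26 : 26 ≤ cc := by omega
    have hL4 : 4*L + 5 ≤ cc := by omega
    have hone : (1:ℕ) ≤ 2*(cc*(cc+2)) := by
      have h0 : 0 < cc*(cc+2) := Nat.mul_pos (by omega) (by omega)
      linarith
    have main : E + 2 ≤ (cc+2)*(cc+1) + 2*(cc*(cc+2)) := by
      rw [hE, hE1, hj1, hj', ht1]
      have hint : (4*L+5)*cc ≤ cc*cc := Nat.mul_le_mul_right cc hL4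
      nlinarith
    rw [hj1, hj', ht1]
    set X := (cc+2)*(cc+1) with hX
    have hXc : (cc+2)*((cc+1)) = X := rfl
    set Y := 2*(cc*(cc+2)) with hY
    omega
  -- step 5/6: conclude
  have hrq : q = 2*r := by
    rw [hq, hr, hj]
    have h1 : 2 ≤ (2:ℕ)^(t-2) := by
      calc (2:ℕ) = 2^1 := rfl
        _ ≤ 2^(t-2) := Nat.pow_le_pow_right (by norm_num) (by omega)
    omega
  have step5 : 2^(s/r) * q^s ≤ 2^(j*s) := by
    have h0 := pow_div r s hr1
    have h2r2 : 2*r + 2 = 2^j := by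
      rw [hr]
      have h1 : 2 ≤ (2:ℕ)^(t-2) := by
        calc (2:ℕ) = 2^1 := rfl
          _ ≤ 2^(t-2) := Nat.pow_le_pow_right (by norm_num) (by omega)
      rw [hj, ← hP2]; omega
    rw [h2r2, ← hrq] at h0
    rw [pow_mul]
    exact h0
  have hqs : 0 < q^s := pow_pos (by omega) s
  have hms : (j-1) + s = m := by omega
  calc 2^j * N^j * (∑ i ∈ Finset.range j, m.choose i * 2 ^ i * q ^ (m - i))
      ≤ 2^j * N^j * (j * ((2*m)^(j-1) * q^s)) := Nat.mul_le_mul_left _ step2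
    _ ≤ 2^E * q^s := step3
    _ < 2^(j*(j-1) + s/r) * q^s := by
        apply (Nat.mul_lt_mul_right hqs).mpr
        apply Nat.pow_lt_pow_right (by norm_num)
        omega
    _ = 2^(j*(j-1)) * (2^(s/r) * q^s) := by rw [← mul_assoc, ← pow_add]
    _ ≤ 2^(j*(j-1)) * 2^(j*s) := Nat.mul_le_mul_left _ step5
    _ = 2^(j*m) := by rw [← pow_add, ← hms]; ring_nf

section Aux
open Finset

/-- The tournament determined by boolean data on pairs. -/
def tournOf (N : ℕ) (f : Fin N × Fin N → Bool) : OrientedGraph (Fin N) where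
  adj u w := (u < w ∧ f (u,w) = true) ∨ (w < u ∧ f (w,u) = false)
  irrefl' v := by rintro (⟨h,_⟩|⟨h,_⟩) <;> exact lt_irrefl _ h
  asymm' u w := by
    rintro (⟨h1,h2⟩|⟨h1,h2⟩) (⟨h3,h4⟩|⟨h3,h4⟩)
    · exact absurd h3 (lt_asymm h1)
    · rw [h2] at h4; cases h4
    · rw [h4] at h2; cases h2
    · exact absurd h3 (lt_asymm h1)

set_option maxHeartbeats 2000000 in
theorem aux_tournament (N j : ℕ) (hj : 1 ≤ j) (hjN : j ≤ N)
    (hineq : 2^j * N^j * (∑ i ∈ Finset.range j,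
        (N-j).choose i * 2^i * (2^j - 2)^(N-j-i)) < 2^(j*(N-j))) :
    ∃ C : OrientedGraph (Fin N),
      (∀ u v, u ≠ v → C.adj u v ∨ C.adj v u) ∧ C.HasPropP j j := by
  classical
  let Bad : ((Fin j → Bool) × (Fin j → Fin N)) → (Fin N × Fin N → Bool) → Prop := fun p f =>
    Function.Injective p.2 ∧ ((tournOf N f).NSet p.1 p.2).ncard < j
  set SB := (∑ i ∈ Finset.range j, (N-j).choose i * 2^i * (2^j - 2)^(N-j-i)) with hSB
  -- per-pair bound
  have per : ∀ p : (Fin j → Bool) × (Fin j → Fin N),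
      ((Finset.univ : Finset (Fin N × Fin N → Bool)).filter (fun f => Bad p f)).card
        ≤ SB * 2 ^ (N*N - (N-j)*j) := by
    rintro ⟨a, v⟩
    by_cases hv : Function.Injective v
    swap
    · rw [Finset.filter_false_of_mem (fun f _ hb => hv hb.1)]
      simp
    -- the complement of the range of v
    let W := {w : Fin N // w ∉ Set.range v}
    have hcW : Fintype.card W = N - j := by
      have h1 : Fintype.card {w : Fin N // w ∈ Set.range v} = Fintype.card (Fin j) :=
        (Fintype.card_congr (Equiv.ofInjective v hv)).symm
      rw [Fintype.card_subtype_compl, h1, Fintype.card_fin, Fintype.card_fin]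
    let c : W × Fin j → Fin N × Fin N := fun x =>
      if (v x.2 : Fin N) < x.1.1 then (v x.2, x.1.1) else (x.1.1, v x.2)
    have hc : Function.Injective c := by
      rintro ⟨⟨w, hw⟩, i⟩ ⟨⟨w', hw'⟩, i'⟩ h
      simp only [c] at h
      split_ifs at h with h1 h2 h2 <;>
        rw [Prod.mk.injEq] at h <;> obtain ⟨ha, hb⟩ := h
      · have : i = i' := hv ha
        subst this; simp [hb]
      · exact absurd ⟨i, ha⟩ hw'
      · exact absurd ⟨i', ha.symm⟩ hw
      · have : i = i' := hv hb
        subst this; simp [ha]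
    let σf : W × Fin j → Bool → Bool := fun x b =>
      ((b == decide ((v x.2 : Fin N) < x.1.1)) == a x.2)
    have hσ : ∀ x, Function.Involutive (σf x) := by
      intro x b
      simp only [σf]
      cases b <;> cases hd : decide ((v x.2 : Fin N) < x.1.1) <;> cases ha : a x.2 <;> rfl
    let Good : (Fin j → Bool) → Prop := fun b => (∀ i, b i = true) ∨ (∀ i, b i = false)
    let P : (W × Fin j → Bool) → Prop := fun g =>
      ((Finset.univ : Finset W).filter (fun w => Good (fun i => g (w,i)))).card < j
    -- signed adjacency in terms of f
    have hAdj : ∀ (f : Fin N × Fin N → Bool) (w : W) (i : Fin j) (b : Bool),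
        (tournOf N f).signedAdj b (v i) w.1 ↔
          ((f (c (w,i)) == decide ((v i : Fin N) < w.1)) = b) := by
      intro f w i b
      have hne : (v i : Fin N) ≠ w.1 := fun h => w.2 ⟨i, h⟩
      rcases lt_or_gt_of_ne hne with h | h
      · have hc1 : c (w,i) = (v i, w.1) := if_pos h
        have hd : decide ((v i : Fin N) < w.1) = true := decide_eq_true h
        rw [hc1, hd]
        cases b <;> cases hf : f (v i, w.1) <;>
          simp [OrientedGraph.signedAdj, tournOf, h, lt_asymm h, hf]
      · have hc1 : c (w,i) = (w.1, v i) := if_neg (lt_asymm h)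
        have hd : decide ((v i : Fin N) < w.1) = false := decide_eq_false (lt_asymm h)
        rw [hc1, hd]
        cases b <;> cases hf : f (w.1, v i) <;>
          simp [OrientedGraph.signedAdj, tournOf, h, lt_asymm h, hf]
    -- NSet membership in terms of the twisted data
    have hNSetIff : ∀ (f : Fin N × Fin N → Bool) (w : W),
        (w.1 ∈ (tournOf N f).NSet a v) ↔ Good (fun i => σf (w,i) (f (c (w,i)))) := by
      intro f w
      simp only [OrientedGraph.NSet, Set.mem_setOf_eq, Good]
      apply or_congr <;> apply forall_congr' <;> intro i
      · rw [hAdj f w i (a i)]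
        simp only [σf]
        cases hfc : (f (c (w,i)) == decide ((v i : Fin N) < w.1)) <;>
          cases ha : a i <;> simp
      · rw [hAdj f w i (!(a i))]
        simp only [σf]
        cases hfc : (f (c (w,i)) == decide ((v i : Fin N) < w.1)) <;>
          cases ha : a i <;> simp
    -- Bad implies the pattern count is small
    have claim1 : ∀ f : Fin N × Fin N → Bool, Bad (a,v) f → P (fun x => σf x (f (c x))) := by
      rintro f ⟨-, hcard⟩
      refine lt_of_le_of_lt ?_ hcard
      have hsub : ∀ w ∈ (Finset.univ : Finset W).filter
          (fun w => Good (fun i => σf (w,i) (f (c (w,i))))),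
          w.1 ∈ ((tournOf N f).NSet a v).toFinset := by
        intro w hw
        rw [Finset.mem_filter] at hw
        rw [Set.mem_toFinset]
        exact (hNSetIff f w).2 hw.2
      calc ((Finset.univ : Finset W).filter
            (fun w => Good (fun i => σf (w,i) (f (c (w,i)))))).card
          ≤ ((tournOf N f).NSet a v).toFinset.card :=
            Finset.card_le_card_of_injOn (fun w => w.1) hsub
              Subtype.val_injective.injOn
        _ = ((tournOf N f).NSet a v).ncard := (Set.ncard_eq_toFinset_card' _).symm
    -- count
    have count1 : ((Finset.univ : Finset (Fin N × Fin N → Bool)).filter (fun f => Bad (a,v) f)).card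
        ≤ ((Finset.univ : Finset (Fin N × Fin N → Bool)).filter (fun f => P (fun x => σf x (f (c x))))).card := by
      apply Finset.card_le_card
      intro f hf
      rw [Finset.mem_filter] at hf ⊢
      exact ⟨hf.1, claim1 f hf.2⟩
    have count2 : ((Finset.univ : Finset (Fin N × Fin N → Bool)).filter
          (fun f => P (fun x => σf x (f (c x))))).card
        = Fintype.card {g : W × Fin j → Bool // P g} * 2 ^ (N*N - (N-j)*j) := by
      have hA : Fintype.card (Fin N × Fin N) = N*N := by
        rw [Fintype.card_prod, Fintype.card_fin]
      have hI : Fintype.card (W × Fin j) = (N-j)*j := by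
        rw [Fintype.card_prod, hcW, Fintype.card_fin]
      calc ((Finset.univ : Finset (Fin N × Fin N → Bool)).filter
            (fun f => P (fun x => σf x (f (c x))))).card
          = Fintype.card {f : Fin N × Fin N → Bool // P (fun x => σf x (f (c x)))} :=
            (Fintype.card_subtype _).symm
        _ = Fintype.card {g : W × Fin j → Bool // P g} * 2 ^ (N*N - (N-j)*j) :=
            card_twisted c hc σf hσ P (N*N) ((N-j)*j) hA hI
    have count3 : Fintype.card {g : W × Fin j → Bool // P g} ≤ SB := by
      have ecur : {g : W × Fin j → Bool // P g} ≃
          {G : W → Fin j → Bool //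
            ((Finset.univ : Finset W).filter (fun w => Good (G w))).card < j} :=
        Equiv.subtypeEquiv (Equiv.curry _ _ _) (fun g => Iff.rfl)
      rw [Fintype.card_congr ecur]
      have hGood2 : Fintype.card {b : Fin j → Bool // Good b} = 2 := by
        have hgb : ∀ bb : Bool, Good (fun _ : Fin j => bb) := by
          intro bb
          cases bb
          · exact Or.inr (fun _ => rfl)
          · exact Or.inl (fun _ => rfl)
        have e : {b : Fin j → Bool // Good b} ≃ Bool :=
          { toFun := fun x => x.1 ⟨0, hj⟩
            invFun := fun bb => ⟨fun _ => bb, hgb bb⟩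
            left_inv := by
              rintro ⟨b, hb⟩
              apply Subtype.ext
              funext i
              show b ⟨0, hj⟩ = b i
              rcases hb with hb | hb
              · rw [hb i, hb ⟨0, hj⟩]
              · rw [hb i, hb ⟨0, hj⟩]
            right_inv := fun bb => rfl }
        rw [Fintype.card_congr e, Fintype.card_bool]
      have hcB : Fintype.card (Fin j → Bool) = 2^j := by
        rw [Fintype.card_fun, Fintype.card_bool, Fintype.card_fin]
      have hfin := card_small_good (W := W) (B := Fin j → Bool) Good j 2 (N-j) (2^j)
        hGood2 hcW hcB
      rw [hSB]
      exact le_trans (le_of_eq (Fintype.card_congr' rfl)) hfin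
    calc ((Finset.univ : Finset (Fin N × Fin N → Bool)).filter (fun f => Bad (a,v) f)).card
        ≤ Fintype.card {g : W × Fin j → Bool // P g} * 2 ^ (N*N - (N-j)*j) := by
          rw [← count2]; exact count1
      _ ≤ SB * 2 ^ (N*N - (N-j)*j) := Nat.mul_le_mul_right _ count3
  -- union bound
  have union : ((Finset.univ : Finset (Fin N × Fin N → Bool)).filter (fun f => ∃ p, Bad p f)).card
      < Fintype.card (Fin N × Fin N → Bool) := by
    have h1 : ((Finset.univ : Finset (Fin N × Fin N → Bool)).filter (fun f => ∃ p, Bad p f)).card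
        ≤ ∑ p : ((Fin j → Bool) × (Fin j → Fin N)),
            ((Finset.univ : Finset (Fin N × Fin N → Bool)).filter (fun f => Bad p f)).card := by
      calc ((Finset.univ : Finset (Fin N × Fin N → Bool)).filter (fun f => ∃ p, Bad p f)).card
          ≤ ((Finset.univ : Finset ((Fin j → Bool) × (Fin j → Fin N))).biUnion
              (fun p => (Finset.univ : Finset (Fin N × Fin N → Bool)).filter (fun f => Bad p f))).card := by
            apply Finset.card_le_card
            intro f hf
            rw [Finset.mem_filter] at hf
            obtain ⟨p, hp⟩ := hf.2
            exact Finset.mem_biUnion.2 ⟨p, Finset.mem_univ _, Finset.mem_filter.2 ⟨hf.1, hp⟩⟩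
        _ ≤ _ := Finset.card_biUnion_le
    have h2 : ∑ p : ((Fin j → Bool) × (Fin j → Fin N)),
          ((Finset.univ : Finset (Fin N × Fin N → Bool)).filter (fun f => Bad p f)).card
        ≤ (2^j * N^j) * (SB * 2 ^ (N*N - (N-j)*j)) := by
      calc ∑ p : ((Fin j → Bool) × (Fin j → Fin N)),
            ((Finset.univ : Finset (Fin N × Fin N → Bool)).filter (fun f => Bad p f)).card
          ≤ ∑ _p : ((Fin j → Bool) × (Fin j → Fin N)), SB * 2 ^ (N*N - (N-j)*j) :=
            Finset.sum_le_sum (fun p _ => per p)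
        _ = (2^j * N^j) * (SB * 2 ^ (N*N - (N-j)*j)) := by
            rw [Finset.sum_const, smul_eq_mul, Finset.card_univ, Fintype.card_prod,
              Fintype.card_fun, Fintype.card_fun, Fintype.card_bool, Fintype.card_fin,
              Fintype.card_fin]
    have hpow : 0 < 2 ^ (N*N - (N-j)*j) := Nat.pow_pos (by norm_num)
    calc ((Finset.univ : Finset (Fin N × Fin N → Bool)).filter (fun f => ∃ p, Bad p f)).card
        ≤ (2^j * N^j) * (SB * 2 ^ (N*N - (N-j)*j)) := le_trans h1 h2
      _ = (2^j * N^j * SB) * 2 ^ (N*N - (N-j)*j) := by ring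
      _ < 2^(j*(N-j)) * 2 ^ (N*N - (N-j)*j) := by
          apply (Nat.mul_lt_mul_right hpow).mpr
          rw [hSB]
          exact hineq
      _ = 2^(j*(N-j) + (N*N - (N-j)*j)) := by rw [← pow_add]
      _ = 2^(N*N) := by
          congr 1
          have hle : (N-j)*j ≤ N*N := Nat.mul_le_mul (Nat.sub_le _ _) hjN
          have : j*(N-j) = (N-j)*j := Nat.mul_comm _ _
          omega
      _ = Fintype.card (Fin N × Fin N → Bool) := by
          rw [show Fintype.card (Fin N × Fin N → Bool) = 2^(N*N) from ?_]
          rw [Fintype.card_fun, Fintype.card_bool, Fintype.card_prod, Fintype.card_fin]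
  -- extract a good tournament
  obtain ⟨f, hf⟩ : ∃ f : Fin N × Fin N → Bool, ¬ ∃ p, Bad p f := by
    by_contra hcon
    push_neg at hcon
    have heq : (Finset.univ : Finset (Fin N × Fin N → Bool)).filter (fun f => ∃ p, Bad p f) = Finset.univ :=
      Finset.filter_true_of_mem (fun f _ => hcon f)
    rw [heq, Finset.card_univ] at union
    exact lt_irrefl _ union
  refine ⟨tournOf N f, ?_, ?_⟩
  · intro u w hne
    simp only [tournOf]
    rcases lt_or_gt_of_ne hne with h | h
    · cases hfv : f (u,w)
      · exact Or.inr (Or.inr ⟨h, rfl⟩)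
      · exact Or.inl (Or.inl ⟨h, rfl⟩)
    · cases hfv : f (w,u)
      · exact Or.inl (Or.inr ⟨h, rfl⟩)
      · exact Or.inr (Or.inl ⟨h, rfl⟩)
  · intro a v hv
    by_contra hlt
    push_neg at hlt
    exact hf ⟨(a,v), hv, hlt⟩

end Aux

/-- For every `t ≥ 29`, there is a tournament on exactly `(t-3)(t-1)·2^(t-1)` vertices
having Property `P(t-1, t-1)`. -/
theorem exists_tournament_hasPropP (t : ℕ) (ht : 29 ≤ t) :
    ∃ C : OrientedGraph (Fin ((t - 3) * (t - 1) * 2 ^ (t - 1))),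
      (∀ u v, u ≠ v → C.adj u v ∨ C.adj v u) ∧ C.HasPropP (t - 1) (t - 1) := by
  have hineq := main_ineq t ht
  have h1 : 1 ≤ t - 1 := by omega
  have h2 : t - 1 < 2^(t-1) := Nat.lt_two_pow_self
  have hjN : t - 1 ≤ (t-3)*(t-1)*2^(t-1) := by
    calc t - 1 ≤ 2^(t-1) := le_of_lt h2
      _ = 1*1*2^(t-1) := by ring
      _ ≤ (t-3)*(t-1)*2^(t-1) :=
        Nat.mul_le_mul (Nat.mul_le_mul (by omega) (by omega)) (le_refl _)
  exact aux_tournament _ _ h1 hjN hineq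
end
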